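/- arXiv:1206.0633 — 7 statements merged into one kernel-verified Lean document; each statement's English description precedes it below -/
import Mathlib

section
/- The sequence (x_w)_{w≥1} is a probability distribution, i.e. Σ_{w=1}^∞ x_w = 1. -/
/-- The asymptotic weight distribution `(x_w)_{w ≥ 1}` is a probability distribution:
`∑_{w=1}^∞ x_w = 1`. -/
theorem stmt_0 (α₁ α₂ β : ℝ) (hα₁ : 0 < α₁) (hα₂ : 0 < α₂) (hβ : 0 < β)
    (α : ℝ) (hα : α = α₁ + α₂)
    (x : ℕ → ℝ) (hx1 : x 1 = 1 / (α + β + 1))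
    (hxrec : ∀ w : ℕ, 2 ≤ w →
      x w = (α * (w - 1) + β) / (α * w + β + 1) * x (w - 1)) :
    HasSum (fun w : ℕ => x (w + 1)) 1 := by
  have hαpos : 0 < α := by rw [hα]; linarith
  set t : ℕ → ℝ := fun n => (α * n + β) * x n with ht
  -- cleaned-up recurrence
  have hrec' : ∀ m : ℕ, 1 ≤ m →
      x (m + 1) = (α * m + β) / (α * (m + 1) + β + 1) * x m := by
    intro m hm
    have h := hxrec (m + 1) (by omega)
    have h1 : (m + 1 : ℕ) - 1 = m := by omega
    rw [h1] at h
    have h2 : ((m + 1 : ℕ) : ℝ) = (m : ℝ) + 1 := by push_cast; ring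
    rw [h2] at h
    convert h using 3 <;> ring
  have hxpos : ∀ n : ℕ, 1 ≤ n → 0 < x n := by
    intro n hn
    induction n with
    | zero => omega
    | succ m ih =>
      rcases Nat.lt_or_ge m 1 with hm | hm
      · interval_cases m
        rw [hx1]; positivity
      · have hxm := ih hm
        rw [hrec' m hm]
        have hnum : 0 < α * m + β := by positivity
        have hden : 0 < α * (m + 1) + β + 1 := by positivity
        positivity
  have htpos : ∀ n : ℕ, 1 ≤ n → 0 < t n := by
    intro n hn
    have : 0 < (α * n + β) := by positivity
    exact mul_pos this (hxpos n hn)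
  -- key telescoping step
  have htrec : ∀ m : ℕ, 1 ≤ m → t (m + 1) = t m - x (m + 1) := by
    intro m hm
    have hden : (α * (m + 1) + β + 1) ≠ 0 := by positivity
    have h := hrec' m hm
    simp only [ht]
    push_cast
    rw [h]
    field_simp
    ring
  -- partial sums formula
  have hsum : ∀ n : ℕ, ∑ k ∈ Finset.range (n + 1), x (k + 1) = 1 - t (n + 1) := by
    intro n
    induction n with
    | zero =>
      have h0 : (α + β + 1) ≠ 0 := by positivity
      have hx1' : x (0 + 1) = 1 / (α + β + 1) := hx1
      simp only [Finset.range_one, Finset.sum_singleton, ht, hx1']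
      push_cast
      field_simp
      rw [Finset.sum_range_one, zero_add, hx1]
      field_simp
      ring
    | succ m ih =>
      rw [Finset.sum_range_succ, ih, htrec (m + 1) (by omega)]
      ring
  -- summability
  have hxnn : ∀ n : ℕ, 0 ≤ x (n + 1) := fun n => (hxpos (n + 1) (by omega)).le
  have hsummable : Summable (fun w : ℕ => x (w + 1)) := by
    apply summable_of_sum_range_le (c := 1) hxnn
    intro n
    cases n with
    | zero => simp
    | succ m =>
      rw [hsum m]
      have := htpos (m + 1) (by omega)
      linarith
  -- the decreasing sequence t (n+1) and its infimum
  have hant : Antitone (fun n : ℕ => t (n + 1)) := by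
    apply antitone_nat_of_succ_le
    intro n
    rw [htrec (n + 1) (by omega)]
    have := hxnn (n + 1)
    linarith
  have hbdd : BddBelow (Set.range fun n : ℕ => t (n + 1)) := by
    refine ⟨0, ?_⟩
    rintro _ ⟨n, rfl⟩
    exact (htpos (n + 1) (by omega)).le
  set L : ℝ := ⨅ n : ℕ, t (n + 1) with hL
  have htend : Filter.Tendsto (fun n : ℕ => t (n + 1)) Filter.atTop (nhds L) :=
    tendsto_atTop_ciInf hant hbdd
  have hL0 : 0 ≤ L :=
    le_ciInf fun n => (htpos (n + 1) (by omega)).le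
  have hLle : ∀ n : ℕ, L ≤ t (n + 1) := fun n => ciInf_le hbdd n
  -- L = 0
  have hLzero : L = 0 := by
    by_contra hne
    have hLpos : 0 < L := lt_of_le_of_ne hL0 (Ne.symm hne)
    have hge : ∀ n : ℕ, L / (α * (n + 1) + β) ≤ x (n + 1) := by
      intro n
      have hd : 0 < α * ((n : ℝ) + 1) + β := by positivity
      rw [div_le_iff₀ hd]
      have := hLle n
      simp only [ht] at this
      push_cast at this ⊢
      nlinarith [this]
    have hs1 : Summable (fun n : ℕ => L / (α * (n + 1) + β)) := by
      apply Summable.of_nonneg_of_le (fun n => by positivity) hge hsummable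
    have hs2 : Summable (fun n : ℕ => 1 / ((n : ℝ) + 1)) := by
      have hle : ∀ n : ℕ, 1 / ((n : ℝ) + 1) ≤ ((α + β) / L) * (L / (α * (n + 1) + β)) := by
        intro n
        have hd : 0 < α * ((n : ℝ) + 1) + β := by positivity
        have h1 : ((α + β) / L) * (L / (α * (n + 1) + β)) = (α + β) / (α * (n + 1) + β) := by
          field_simp
        rw [h1, div_le_div_iff₀ (by positivity) hd]
        have hn0 : (0 : ℝ) ≤ (n : ℝ) := Nat.cast_nonneg n
        nlinarith
      exact Summable.of_nonneg_of_le (fun n => by positivity) hle (hs1.mul_left _)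
    have hs3 : Summable (fun n : ℕ => 1 / ((n : ℝ))) := by
      rw [← summable_nat_add_iff 1]
      convert hs2 using 2 with n
      all_goals try rfl
      push_cast
      ring
    exact Real.not_summable_one_div_natCast hs3
  -- conclude
  obtain ⟨S, hS⟩ := hsummable
  have h1 : Filter.Tendsto (fun n : ℕ => ∑ k ∈ Finset.range (n + 1), x (k + 1))
      Filter.atTop (nhds S) :=
    hS.tendsto_sum_nat.comp (Filter.tendsto_add_atTop_nat 1)
  have h2 : Filter.Tendsto (fun n : ℕ => ∑ k ∈ Finset.range (n + 1), x (k + 1))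
      Filter.atTop (nhds 1) := by
    have : Filter.Tendsto (fun n : ℕ => 1 - t (n + 1)) Filter.atTop (nhds (1 - L)) :=
      Filter.Tendsto.const_sub 1 htend
    rw [hLzero, sub_zero] at this
    exact this.congr fun n => (hsum n).symm
  have : S = 1 := tendsto_nhds_unique h1 h2
  rwa [this] at hS
end

section
/- For all integers w ≥ 1 and 2 ≤ d ≤ 2w, x_{d,w} equals 1/c_w times the coefficient of z^{d−2} in the real polynomial ∏_{i=1}^{w−1} ( i·(α₁ + α₂·z) + β·z² ). -/
open Polynomial Finset

/-- Generating-function form of the explicit solution: `x_{d,w}` equals `1/c_w` times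
the coefficient of `z^{d-2}` in `∏_{i=1}^{w-1} ( i(α₁ + α₂ z) + β z² )`. -/
theorem stmt_4 (α₁ α₂ β : ℝ) (hα₁ : 0 < α₁) (hα₂ : 0 < α₂) (hβ : 0 < β)
    (α : ℝ) (hα : α = α₁ + α₂)
    (x : ℤ → ℕ → ℝ)
    (hbase : x 2 1 = 1 / (α + β + 1))
    (hbase' : ∀ d : ℤ, d ≠ 2 → x d 1 = 0)
    (hrec : ∀ (d : ℤ) (w : ℕ), 2 ≤ w →
      x d w = (1 / (α * w + β + 1)) *
        (α₁ * (w - 1) * x d (w - 1) + α₂ * (w - 1) * x (d - 1) (w - 1)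
          + β * x (d - 2) (w - 1)))
    (c : ℕ → ℝ)
    (hc : ∀ w : ℕ, c w = ∏ j ∈ Finset.Icc 1 w, (α * j + β + 1)) :
    ∀ (w : ℕ), 1 ≤ w → ∀ (d : ℤ), 2 ≤ d → d ≤ 2 * (w : ℤ) →
      x d w = (1 / c w) *
        (∏ i ∈ Finset.Icc 1 (w - 1),
          ((i : ℝ[X]) * (Polynomial.C α₁ + Polynomial.C α₂ * Polynomial.X)
            + Polynomial.C β * Polynomial.X ^ 2)).coeff (d - 2).toNat := by
  have hα0 : 0 < α := by rw [hα]; positivity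
  have hfac : ∀ j : ℕ, (0:ℝ) < α * j + β + 1 := fun j => by positivity
  have hcpos : ∀ w : ℕ, 0 < c w := by
    intro w; rw [hc]; exact Finset.prod_pos (fun j _ => hfac j)
  have hcsucc : ∀ m : ℕ, c (m+1) = c m * (α * (m+1) + β + 1) := by
    intro m
    rw [hc, hc, Finset.prod_Icc_succ_top (by omega : 1 ≤ m+1)]
    push_cast
    ring
  have hzero : ∀ w : ℕ, 1 ≤ w → ∀ d : ℤ, d < 2 → x d w = 0 := by
    intro w hw
    induction w, hw using Nat.le_induction with
    | base => exact fun d hd => hbase' d (by omega)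
    | succ m hm ih =>
      intro d hd
      rw [hrec d (m+1) (by omega)]
      simp only [Nat.add_sub_cancel]
      rw [ih d hd, ih (d-1) (by omega), ih (d-2) (by omega)]
      ring
  set Q : ℕ → ℝ[X] := fun i =>
    (i : ℝ[X]) * (Polynomial.C α₁ + Polynomial.C α₂ * Polynomial.X)
      + Polynomial.C β * Polynomial.X ^ 2 with hQ
  have hQcoeff : ∀ (i : ℕ) (p : ℝ[X]) (n : ℕ), (p * Q i).coeff n =
      α₁ * i * p.coeff n + α₂ * i * (if 1 ≤ n then p.coeff (n-1) else 0)
        + β * (if 2 ≤ n then p.coeff (n-2) else 0) := by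
    intro i p n
    have hQi : Q i = Polynomial.C (α₁ * i) + Polynomial.C (α₂ * i) * Polynomial.X
        + Polynomial.C β * Polynomial.X ^ 2 := by
      simp only [hQ]
      rw [← Polynomial.C_eq_natCast (R:=ℝ) i]
      simp only [Polynomial.C_mul]
      ring
    have : p * Q i = Polynomial.C (α₁ * i) * p
        + Polynomial.C (α₂ * i) * (p * Polynomial.X ^ 1)
        + Polynomial.C β * (p * Polynomial.X ^ 2) := by
      rw [hQi]; ring
    rw [this]
    simp only [Polynomial.coeff_add, Polynomial.coeff_C_mul, Polynomial.coeff_mul_X_pow']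
  have key : ∀ m : ℕ, ∀ n : ℕ, x ((n:ℤ)+2) (m+1) =
      (1 / c (m+1)) * (∏ i ∈ Finset.Icc 1 m, Q i).coeff n := by
    intro m
    induction m with
    | zero =>
      intro n
      have h0 : Finset.Icc 1 0 = (∅ : Finset ℕ) := by decide
      rw [h0, Finset.prod_empty]
      have hc1 : c 1 = α + β + 1 := by
        rw [hc]; simp
      cases n with
      | zero => simpa [hc1] using hbase
      | succ k =>
        have hx : x (((k+1:ℕ):ℤ)+2) 1 = 0 := hbase' _ (by push_cast; omega)
        rw [hx, Polynomial.coeff_one, if_neg (by omega : ¬ (k+1 = 0))]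
        simp
    | succ m ih =>
      intro n
      rw [hrec _ (m+1+1) (by omega)]
      simp only [Nat.add_sub_cancel]
      rw [Finset.prod_Icc_succ_top (by omega : 1 ≤ m+1), hQcoeff]
      have hx2 : x ((n:ℤ)+2) (m+1) = (1 / c (m+1)) * (∏ i ∈ Finset.Icc 1 m, Q i).coeff n :=
        ih n
      have hcc := hcsucc (m+1)
      have hc1 : c (m+1) ≠ 0 := ne_of_gt (hcpos _)
      have hc2 : (α * (↑m+1+1) + β + 1) ≠ 0 := by
        have := hfac (m+2); push_cast at this ⊢; linarith
      match n with
      | 0 =>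
        have h1 : x ((0:ℤ)+2-1) (m+1) = 0 := hzero (m+1) (by omega) _ (by omega)
        have h2 : x ((0:ℤ)+2-2) (m+1) = 0 := hzero (m+1) (by omega) _ (by omega)
        push_cast at h1 h2 hx2 hcc ⊢
        rw [h1, h2, hx2, hcc]
        set A := (∏ i ∈ Finset.Icc 1 m, Q i).coeff 0 with hA
        field_simp
        ring
      | 1 =>
        have h1 : x ((1:ℤ)+2-1) (m+1) = (1 / c (m+1)) * (∏ i ∈ Finset.Icc 1 m, Q i).coeff 0 := by
          have := ih 0; push_cast at this ⊢; convert this using 2 <;> norm_num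
        have h2 : x ((1:ℤ)+2-2) (m+1) = 0 := hzero (m+1) (by omega) _ (by omega)
        push_cast at h1 h2 hx2 hcc ⊢
        rw [h1, h2, hx2, hcc]
        set A := (∏ i ∈ Finset.Icc 1 m, Q i).coeff 1 with hA
        set B := (∏ i ∈ Finset.Icc 1 m, Q i).coeff 0 with hB
        field_simp
        ring
      | (k+2) =>
        have h1 : x (((k:ℤ)+2)+2-1) (m+1)
            = (1 / c (m+1)) * (∏ i ∈ Finset.Icc 1 m, Q i).coeff (k+1) := by
          have := ih (k+1); push_cast at this ⊢; convert this using 2; ring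
        have h2 : x (((k:ℤ)+2)+2-2) (m+1)
            = (1 / c (m+1)) * (∏ i ∈ Finset.Icc 1 m, Q i).coeff k := by
          have := ih k; push_cast at this ⊢; convert this using 2; ring
        push_cast at h1 h2 hx2 hcc ⊢
        rw [h1, h2, hx2, hcc]
        set A := (∏ i ∈ Finset.Icc 1 m, Q i).coeff (k+2) with hA
        set B := (∏ i ∈ Finset.Icc 1 m, Q i).coeff (k+1) with hB
        set D := (∏ i ∈ Finset.Icc 1 m, Q i).coeff k with hD
        field_simp
        ring
  intro w hw d hd hdw
  obtain ⟨m, rfl⟩ : ∃ m, w = m + 1 := ⟨w-1, by omega⟩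
  have hn : d = ((d-2).toNat : ℤ) + 2 := by omega
  rw [hn]
  have htn : ((((d-2).toNat : ℤ) + 2) - 2).toNat = (d-2).toNat := by omega
  rw [htn]
  simpa only [Nat.add_sub_cancel] using key m (d-2).toNat
end

section
/- For all integers w ≥ 1 and 2 ≤ d ≤ 2w, P(S_W = d and W = w) = x_{d,w}, where S_W denotes the random variable ω ↦ S_{W(ω)}(ω). -/
open MeasureTheory ProbabilityTheory

/-- Construction of the two-dimensional limit distribution:
`P(S_W = d, W = w) = x_{d,w}` for `w ≥ 1`, `2 ≤ d ≤ 2w`. -/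
theorem stmt_5 (α₁ α₂ β : ℝ) (hα₁ : 0 < α₁) (hα₂ : 0 < α₂) (hβ : 0 < β)
    (α : ℝ) (hα : α = α₁ + α₂)
    -- the weight distribution (x_w)
    (x : ℕ → ℝ) (hx1 : x 1 = 1 / (α + β + 1))
    (hxrec : ∀ w : ℕ, 2 ≤ w →
      x w = (α * (w - 1) + β) / (α * w + β + 1) * x (w - 1))
    -- the joint limits (x_{d,w})
    (x2 : ℤ → ℕ → ℝ)
    (hbase : x2 2 1 = 1 / (α + β + 1))
    (hbase' : ∀ d : ℤ, d ≠ 2 → x2 d 1 = 0)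
    (hrec : ∀ (d : ℤ) (w : ℕ), 2 ≤ w →
      x2 d w = (1 / (α * w + β + 1)) *
        (α₁ * (w - 1) * x2 d (w - 1) + α₂ * (w - 1) * x2 (d - 1) (w - 1)
          + β * x2 (d - 2) (w - 1)))
    -- the probability space and the random variables
    {Ω : Type*} [MeasurableSpace Ω] (μ : Measure Ω) [IsProbabilityMeasure μ]
    (W : Ω → ℕ) (ξ : ℕ → Ω → ℕ)
    (hWmeas : Measurable W) (hξmeas : ∀ i, Measurable (ξ i))
    (hW : ∀ w : ℕ, 1 ≤ w → (μ {ω | W ω = w}).toReal = x w)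
    (hξ1 : ∀ᵐ ω ∂μ, ξ 1 ω = 2)
    (hindep : iIndepFun
      (fun i : ℕ => if i = 0 then W else ξ (i + 1)) μ)
    (hξ : ∀ w : ℕ, 2 ≤ w →
      (μ {ω | ξ w ω = 0}).toReal = α₁ * (w - 1) / (α * (w - 1) + β) ∧
      (μ {ω | ξ w ω = 1}).toReal = α₂ * (w - 1) / (α * (w - 1) + β) ∧
      (μ {ω | ξ w ω = 2}).toReal = β / (α * (w - 1) + β))
    (S : ℕ → Ω → ℕ)
    (hS : ∀ w ω, S w ω = ∑ i ∈ Finset.Icc 1 w, ξ i ω) :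
    ∀ (w : ℕ), 1 ≤ w → ∀ (d : ℤ), 2 ≤ d → d ≤ 2 * (w : ℤ) →
      (μ {ω | (S (W ω) ω : ℤ) = d ∧ W ω = w}).toReal = x2 d w := by
  classical
  set f : ℕ → Ω → ℕ := fun i => if i = 0 then W else ξ (i + 1) with hf
  -- positivity facts
  have hαpos : 0 < α := by rw [hα]; linarith
  have hden1 : ∀ w : ℕ, 0 < α * w + β + 1 := by
    intro w
    have := mul_nonneg hαpos.le (Nat.cast_nonneg (α := ℝ) w)
    linarith
  have hden2 : ∀ w : ℕ, 0 < α * w + β := by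
    intro w
    have := mul_nonneg hαpos.le (Nat.cast_nonneg (α := ℝ) w)
    linarith
  have hxpos : ∀ w : ℕ, 1 ≤ w → 0 < x w := by
    intro w hw
    induction w, hw using Nat.le_induction with
    | base =>
      rw [hx1]
      have := hden1 0
      have h1 : 0 < α + β + 1 := by push_cast at this; linarith
      positivity
    | succ w hw ih =>
      have h := hxrec (w + 1) (by omega)
      simp only [Nat.add_sub_cancel] at h
      have hc : ((w + 1 : ℕ) : ℝ) - 1 = (w : ℝ) := by push_cast; ring
      rw [hc] at h
      rw [h]
      exact mul_pos (div_pos (hden2 w) (hden1 (w + 1))) ih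
  -- measurability
  have hfmeas : ∀ i, Measurable (f i) := by
    intro i
    simp only [hf]
    split_ifs
    · exact hWmeas
    · exact hξmeas _
  have hSmeas : ∀ v, Measurable (S v) := by
    intro v
    have : S v = fun ω => ∑ i ∈ Finset.Icc 1 v, ξ i ω := funext (hS v)
    rw [this]
    exact Finset.measurable_sum _ (fun i _ => hξmeas i)
  -- splitting of S
  have hSsplit : ∀ v ω, 1 ≤ v → S v ω = ξ 1 ω + ∑ i ∈ Finset.Icc 2 v, ξ i ω := by
    intro v ω hv
    rw [hS]
    rw [show Finset.Icc 1 v = insert 1 (Finset.Icc 2 v) by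
      ext i; simp only [Finset.mem_Icc, Finset.mem_insert]; omega]
    rw [Finset.sum_insert (by simp)]
  have hreindex : ∀ v ω, 1 ≤ v →
      ∑ i ∈ Finset.Icc 1 (v - 1), f i ω = ∑ i ∈ Finset.Icc 2 v, ξ i ω := by
    intro v ω hv
    have h1 : Finset.Icc 2 v = (Finset.Icc 1 (v - 1)).map (addRightEmbedding 1) := by
      rw [Finset.map_add_right_Icc]
      congr 1
      omega
    rw [h1, Finset.sum_map]
    apply Finset.sum_congr rfl
    intro i hi
    simp only [Finset.mem_Icc] at hi
    simp only [hf, addRightEmbedding_apply]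
    rw [if_neg (by omega)]
  have hSae : ∀ v, 1 ≤ v →
      (S v) =ᵐ[μ] (fun ω => 2 + ∑ i ∈ Finset.Icc 1 (v - 1), f i ω) := by
    intro v hv
    filter_upwards [hξ1] with ω h1
    rw [hSsplit v ω hv, h1, ← hreindex v ω hv]
  -- the generic independence statement
  have hindepGen : ∀ v j : ℕ, 1 ≤ v → j ∉ Finset.Icc 1 (v - 1) →
      IndepFun (S v) (f j) μ := by
    intro v j hv hj
    have hdisj : Disjoint (Finset.Icc 1 (v - 1)) ({j} : Finset ℕ) :=
      Finset.disjoint_singleton_right.mpr hj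
    have h1 := hindep.indepFun_finset (Finset.Icc 1 (v - 1)) {j} hdisj hfmeas
    have hφ : Measurable (fun g : (Finset.Icc 1 (v - 1) : Finset ℕ) → ℕ =>
        2 + ∑ i, g i) :=
      measurable_const.add (Finset.measurable_sum _ (fun i _ => measurable_pi_apply i))
    have hψ : Measurable (fun g : ({j} : Finset ℕ) → ℕ =>
        g ⟨j, Finset.mem_singleton_self j⟩) := measurable_pi_apply _
    have h2 := ProbabilityTheory.IndepFun.comp h1 hφ hψ
    refine h2.congr ?_ ?_
    · filter_upwards [hSae v hv] with ω hω
      show 2 + ∑ i : (Finset.Icc 1 (v - 1) : Finset ℕ), f i ω = S v ω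
      rw [Finset.sum_coe_sort (Finset.Icc 1 (v - 1)) (fun i => f i ω)]
      exact hω.symm
    · exact Filter.Eventually.of_forall (fun ω => rfl)
  have hcastmeas : Measurable (fun n : ℕ => (n : ℤ)) := measurable_from_top
  have hindepW : ∀ v, 1 ≤ v → IndepFun (fun ω => (S v ω : ℤ)) W μ := by
    intro v hv
    have h := hindepGen v 0 hv (by simp)
    have hf0 : f 0 = W := by simp [hf]
    rw [hf0] at h
    have := h.comp hcastmeas measurable_id
    exact this
  have hindepXi : ∀ w, 1 ≤ w → IndepFun (fun ω => (S w ω : ℤ)) (ξ (w + 1)) μ := by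
    intro w hw
    have hmem : w ∉ Finset.Icc 1 (w - 1) := by
      simp only [Finset.mem_Icc]; omega
    have h := hindepGen w w hw hmem
    have hfw : f w = ξ (w + 1) := by
      simp only [hf]
      rw [if_neg (by omega)]
    rw [hfw] at h
    have := h.comp hcastmeas measurable_id
    exact this
  -- product rule
  have hmul : ∀ (g : Ω → ℤ) (h : Ω → ℕ), IndepFun g h μ → ∀ (d : ℤ) (b : ℕ),
      μ {ω | g ω = d ∧ h ω = b} = μ {ω | g ω = d} * μ {ω | h ω = b} := by
    intro g h hi d b
    have := hi.measure_inter_preimage_eq_mul {d} {b}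
      (measurableSet_singleton d) (measurableSet_singleton b)
    exact this
  -- the union of the three values of ξ (w+1) is conull
  have hnull : ∀ w : ℕ, 1 ≤ w →
      μ ({ω | ξ (w + 1) ω = 0} ∪ {ω | ξ (w + 1) ω = 1} ∪ {ω | ξ (w + 1) ω = 2})ᶜ = 0 := by
    intro w hw
    obtain ⟨h0, h1, h2⟩ := hξ (w + 1) (by omega)
    have hc : ((w + 1 : ℕ) : ℝ) - 1 = (w : ℝ) := by push_cast; ring
    rw [hc] at h0 h1 h2
    have hA0 : MeasurableSet {ω | ξ (w + 1) ω = 0} := hξmeas _ (measurableSet_singleton 0)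
    have hA1 : MeasurableSet {ω | ξ (w + 1) ω = 1} := hξmeas _ (measurableSet_singleton 1)
    have hA2 : MeasurableSet {ω | ξ (w + 1) ω = 2} := hξmeas _ (measurableSet_singleton 2)
    have hd01 : Disjoint {ω | ξ (w + 1) ω = 0} {ω | ξ (w + 1) ω = 1} := by
      rw [Set.disjoint_left]; intro ω hω hω'; simp only [Set.mem_setOf_eq] at hω hω'; omega
    have hd2 : Disjoint ({ω | ξ (w + 1) ω = 0} ∪ {ω | ξ (w + 1) ω = 1}) {ω | ξ (w + 1) ω = 2} := by
      rw [Set.disjoint_left]; intro ω hω hω'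
      simp only [Set.mem_union, Set.mem_setOf_eq] at hω hω'; omega
    have hu : μ ({ω | ξ (w + 1) ω = 0} ∪ {ω | ξ (w + 1) ω = 1} ∪ {ω | ξ (w + 1) ω = 2})
        = μ {ω | ξ (w + 1) ω = 0} + μ {ω | ξ (w + 1) ω = 1} + μ {ω | ξ (w + 1) ω = 2} := by
      rw [measure_union hd2 hA2, measure_union hd01 hA1]
    have htr : (μ ({ω | ξ (w + 1) ω = 0} ∪ {ω | ξ (w + 1) ω = 1} ∪ {ω | ξ (w + 1) ω = 2})).toReal
        = 1 := by
      rw [hu, ENNReal.toReal_add (by finiteness) (by finiteness),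
        ENNReal.toReal_add (by finiteness) (by finiteness), h0, h1, h2]
      have hne : α * (w : ℝ) + β ≠ 0 := (hden2 w).ne'
      field_simp
      rw [hα]
    rw [prob_compl_eq_zero_iff ((hA0.union hA1).union hA2)]
    have h1' : (μ ({ω | ξ (w + 1) ω = 0} ∪ {ω | ξ (w + 1) ω = 1} ∪ {ω | ξ (w + 1) ω = 2})).toReal
        = (1 : ENNReal).toReal := by simpa using htr
    exact (ENNReal.toReal_eq_toReal_iff' (measure_ne_top μ _) ENNReal.one_ne_top).mp h1'
  -- decomposition of the event {S (w+1) = d}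
  have hdecomp : ∀ w : ℕ, 1 ≤ w → ∀ d : ℤ,
      μ {ω | (S (w + 1) ω : ℤ) = d} =
        μ {ω | (S w ω : ℤ) = d ∧ ξ (w + 1) ω = 0}
        + μ {ω | (S w ω : ℤ) = d - 1 ∧ ξ (w + 1) ω = 1}
        + μ {ω | (S w ω : ℤ) = d - 2 ∧ ξ (w + 1) ω = 2} := by
    intro w hw d
    have hadd : ∀ ω, S (w + 1) ω = S w ω + ξ (w + 1) ω := by
      intro ω
      rw [hS, hS, show Finset.Icc 1 (w + 1) = insert (w + 1) (Finset.Icc 1 w) by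
        ext i; simp only [Finset.mem_Icc, Finset.mem_insert]; omega,
        Finset.sum_insert (by simp)]
      ring
    have hA0 : MeasurableSet {ω | ξ (w + 1) ω = 0} := hξmeas _ (measurableSet_singleton 0)
    have hA1 : MeasurableSet {ω | ξ (w + 1) ω = 1} := hξmeas _ (measurableSet_singleton 1)
    have hA2 : MeasurableSet {ω | ξ (w + 1) ω = 2} := hξmeas _ (measurableSet_singleton 2)
    have hE : MeasurableSet {ω | (S (w + 1) ω : ℤ) = d} :=
      (hcastmeas.comp (hSmeas (w + 1))) (measurableSet_singleton d)
    have key : μ {ω | (S (w + 1) ω : ℤ) = d} =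
        μ ({ω | (S (w + 1) ω : ℤ) = d} ∩
          ({ω | ξ (w + 1) ω = 0} ∪ {ω | ξ (w + 1) ω = 1} ∪ {ω | ξ (w + 1) ω = 2})) :=
      (measure_inter_conull (hnull w hw)).symm
    rw [key, Set.inter_union_distrib_left, Set.inter_union_distrib_left]
    have hEA0 : {ω | (S (w + 1) ω : ℤ) = d} ∩ {ω | ξ (w + 1) ω = 0}
        = {ω | (S w ω : ℤ) = d ∧ ξ (w + 1) ω = 0} := by
      ext ω
      simp only [Set.mem_inter_iff, Set.mem_setOf_eq, hadd ω]
      push_cast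
      omega
    have hEA1 : {ω | (S (w + 1) ω : ℤ) = d} ∩ {ω | ξ (w + 1) ω = 1}
        = {ω | (S w ω : ℤ) = d - 1 ∧ ξ (w + 1) ω = 1} := by
      ext ω
      simp only [Set.mem_inter_iff, Set.mem_setOf_eq, hadd ω]
      push_cast
      omega
    have hEA2 : {ω | (S (w + 1) ω : ℤ) = d} ∩ {ω | ξ (w + 1) ω = 2}
        = {ω | (S w ω : ℤ) = d - 2 ∧ ξ (w + 1) ω = 2} := by
      ext ω
      simp only [Set.mem_inter_iff, Set.mem_setOf_eq, hadd ω]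
      push_cast
      omega
    have hd01 : Disjoint ({ω | (S (w + 1) ω : ℤ) = d} ∩ {ω | ξ (w + 1) ω = 0})
        ({ω | (S (w + 1) ω : ℤ) = d} ∩ {ω | ξ (w + 1) ω = 1}) := by
      rw [Set.disjoint_left]; intro ω hω hω'
      simp only [Set.mem_inter_iff, Set.mem_setOf_eq] at hω hω'; omega
    have hd2 : Disjoint ({ω | (S (w + 1) ω : ℤ) = d} ∩ {ω | ξ (w + 1) ω = 0}
        ∪ {ω | (S (w + 1) ω : ℤ) = d} ∩ {ω | ξ (w + 1) ω = 1})
        ({ω | (S (w + 1) ω : ℤ) = d} ∩ {ω | ξ (w + 1) ω = 2}) := by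
      rw [Set.disjoint_left]; intro ω hω hω'
      simp only [Set.mem_union, Set.mem_inter_iff, Set.mem_setOf_eq] at hω hω'; omega
    rw [measure_union hd2 (hE.inter hA2), measure_union hd01 (hE.inter hA1),
      hEA0, hEA1, hEA2]
  -- the one-dimensional marginal of S
  have probS : ∀ w, 1 ≤ w → ∀ d : ℤ,
      (μ {ω | (S w ω : ℤ) = d}).toReal = x2 d w / x w := by
    intro w hw
    induction w, hw using Nat.le_induction with
    | base =>
      intro d
      have hS1 : ∀ ω, S 1 ω = ξ 1 ω := by intro ω; rw [hS]; simp
      by_cases hd : d = 2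
      · subst hd
        have hae : {ω | (S 1 ω : ℤ) = 2} =ᵐ[μ] (Set.univ : Set Ω) := by
          rw [Filter.eventuallyEq_set]
          filter_upwards [hξ1] with ω h1
          simp [Set.mem_setOf_eq, hS1 ω, h1]
        rw [measure_congr hae, measure_univ, ENNReal.toReal_one, hbase, hx1]
        have hpos : (0 : ℝ) < α + β + 1 := by linarith
        rw [div_self (by positivity)]
      · have hz : μ {ω | (S 1 ω : ℤ) = d} = 0 := by
          rw [measure_eq_zero_iff_ae_notMem]
          filter_upwards [hξ1] with ω h1
          simp only [Set.mem_setOf_eq, hS1 ω, h1]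
          intro hc
          exact hd (by omega)
        rw [hz, hbase' d hd]
        simp
    | succ w hw ih =>
      intro d
      obtain ⟨h0, h1, h2⟩ := hξ (w + 1) (by omega)
      have hc : ((w + 1 : ℕ) : ℝ) - 1 = (w : ℝ) := by push_cast; ring
      rw [hc] at h0 h1 h2
      have e0 := hmul _ (ξ (w + 1)) (hindepXi w hw) d 0
      have e1 := hmul _ (ξ (w + 1)) (hindepXi w hw) (d - 1) 1
      have e2 := hmul _ (ξ (w + 1)) (hindepXi w hw) (d - 2) 2
      beta_reduce at e0 e1 e2
      rw [hdecomp w hw d, ENNReal.toReal_add (by finiteness) (by finiteness),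
        ENNReal.toReal_add (by finiteness) (by finiteness), e0, e1, e2,
        ENNReal.toReal_mul, ENNReal.toReal_mul, ENNReal.toReal_mul,
        h0, h1, h2, ih d, ih (d - 1), ih (d - 2)]
      rw [hrec d (w + 1) (by omega), hxrec (w + 1) (by omega)]
      simp only [Nat.add_sub_cancel]
      rw [hc]
      have hxw : x w ≠ 0 := (hxpos w hw).ne'
      have hD1 : α * (w : ℝ) + β ≠ 0 := (hden2 w).ne'
      have hD2 : α * ((w + 1 : ℕ) : ℝ) + β + 1 ≠ 0 := (hden1 (w + 1)).ne'
      field_simp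
  -- conclusion
  intro w hw d _ _
  have hset : {ω | (S (W ω) ω : ℤ) = d ∧ W ω = w} = {ω | (S w ω : ℤ) = d ∧ W ω = w} := by
    ext ω
    simp only [Set.mem_setOf_eq]
    constructor
    · rintro ⟨h1, h2⟩; rw [h2] at h1; exact ⟨h1, h2⟩
    · rintro ⟨h1, h2⟩; rw [h2]; exact ⟨h1, rfl⟩
  have e := hmul _ W (hindepW w hw) d w
  beta_reduce at e
  rw [hset, e, ENNReal.toReal_mul, probS w hw d, hW w hw,
    div_mul_cancel₀ _ (hxpos w hw).ne']
end

section
/- For every integer w ≥ 2, E[ξ_w] = α₂/α + (α+α₁)·β/(α·(α(w−1)+β)); consequently there is a constant C > 0 such that |E[S_w] − (α₂/α)·w| ≤ C·log w for every integer w ≥ 2. -/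
open MeasureTheory ProbabilityTheory

lemma aux_expect {Ω : Type*} [MeasurableSpace Ω] (μ : Measure Ω) [IsProbabilityMeasure μ]
    (f : Ω → ℕ) (hf : Measurable f) (p0 p1 p2 : ℝ)
    (h0 : (μ {ω | f ω = 0}).toReal = p0)
    (h1 : (μ {ω | f ω = 1}).toReal = p1)
    (h2 : (μ {ω | f ω = 2}).toReal = p2)
    (hsum : p0 + p1 + p2 = 1) :
    Integrable (fun ω => (f ω : ℝ)) μ ∧ ∫ ω, (f ω : ℝ) ∂μ = p1 + 2 * p2 := by
  set A0 : Set Ω := {ω | f ω = 0} with hA0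
  set A1 : Set Ω := {ω | f ω = 1} with hA1
  set A2 : Set Ω := {ω | f ω = 2} with hA2
  have m0 : MeasurableSet A0 := hf (measurableSet_singleton 0)
  have m1 : MeasurableSet A1 := hf (measurableSet_singleton 1)
  have m2 : MeasurableSet A2 := hf (measurableSet_singleton 2)
  have d01 : Disjoint A0 A1 := by
    rw [Set.disjoint_left]; intro ω h h'; simp only [hA0, hA1, Set.mem_setOf_eq] at h h'; omega
  have d02 : Disjoint (A0 ∪ A1) A2 := by
    rw [Set.disjoint_left]; intro ω h h'
    simp only [hA0, hA1, hA2, Set.mem_union, Set.mem_setOf_eq] at h h'; omega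
  have hU : μ (A0 ∪ A1 ∪ A2) = μ A0 + μ A1 + μ A2 := by
    rw [measure_union d02 m2, measure_union d01 m1]
  have hU1 : μ (A0 ∪ A1 ∪ A2) = 1 := by
    have ht : (μ (A0 ∪ A1 ∪ A2)).toReal = 1 := by
      rw [hU, ENNReal.toReal_add (by finiteness) (by finiteness),
        ENNReal.toReal_add (by finiteness) (by finiteness), h0, h1, h2, hsum]
    have hne : μ (A0 ∪ A1 ∪ A2) ≠ ⊤ := by finiteness
    rw [← ENNReal.ofReal_toReal hne, ht]; simp
  have hcompl : μ (A0 ∪ A1 ∪ A2)ᶜ = 0 := by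
    rw [measure_compl ((m0.union m1).union m2) (by finiteness), measure_univ, hU1, tsub_self]
  have hae : ∀ᵐ ω ∂μ, ω ∈ A0 ∪ A1 ∪ A2 := by
    rw [ae_iff]
    convert hcompl using 2
    rfl
  set g : Ω → ℝ := fun ω => A1.indicator (fun _ => (1 : ℝ)) ω + A2.indicator (fun _ => (2 : ℝ)) ω
    with hg
  have hfg : (fun ω => (f ω : ℝ)) =ᵐ[μ] g := by
    filter_upwards [hae] with ω hω
    simp only [hA0, hA1, hA2, Set.mem_union, Set.mem_setOf_eq] at hω
    have mem1 : ω ∈ A1 ↔ f ω = 1 := Iff.rfl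
    have mem2 : ω ∈ A2 ↔ f ω = 2 := Iff.rfl
    show (f ω : ℝ) = A1.indicator (fun _ => (1 : ℝ)) ω + A2.indicator (fun _ => (2 : ℝ)) ω
    obtain (h | h) | h := hω
    · rw [Set.indicator_of_notMem (by rw [mem1]; omega),
        Set.indicator_of_notMem (by rw [mem2]; omega), h]; norm_num
    · rw [Set.indicator_of_mem (mem1.mpr h), Set.indicator_of_notMem (by rw [mem2]; omega), h]
      norm_num
    · rw [Set.indicator_of_notMem (by rw [mem1]; omega), Set.indicator_of_mem (mem2.mpr h), h]
      norm_num
  have ig : Integrable g μ :=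
    ((integrable_const (1 : ℝ)).indicator m1).add ((integrable_const (2 : ℝ)).indicator m2)
  refine ⟨ig.congr hfg.symm, ?_⟩
  rw [integral_congr_ae hfg, hg,
    integral_add ((integrable_const (1 : ℝ)).indicator m1) ((integrable_const (2 : ℝ)).indicator m2),
    integral_indicator_const _ m1, integral_indicator_const _ m2, measureReal_def, measureReal_def, h1, h2]
  simp only [smul_eq_mul]
  ring

/-- `E[ξ_w] = α₂/α + (α+α₁)β/(α(α(w-1)+β))` for `w ≥ 2`, and consequently
`|E[S_w] - (α₂/α)w| ≤ C log w` for some constant `C > 0`. -/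
theorem stmt_7 (α₁ α₂ β : ℝ) (hα₁ : 0 < α₁) (hα₂ : 0 < α₂) (hβ : 0 < β)
    (α : ℝ) (hα : α = α₁ + α₂)
    (x : ℕ → ℝ) (hx1 : x 1 = 1 / (α + β + 1))
    (hxrec : ∀ w : ℕ, 2 ≤ w →
      x w = (α * (w - 1) + β) / (α * w + β + 1) * x (w - 1))
    {Ω : Type*} [MeasurableSpace Ω] (μ : Measure Ω) [IsProbabilityMeasure μ]
    (W : Ω → ℕ) (ξ : ℕ → Ω → ℕ)
    (hWmeas : Measurable W) (hξmeas : ∀ i, Measurable (ξ i))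
    (hW : ∀ w : ℕ, 1 ≤ w → (μ {ω | W ω = w}).toReal = x w)
    (hξ1 : ∀ᵐ ω ∂μ, ξ 1 ω = 2)
    (hindep : iIndepFun
      (fun i : ℕ => if i = 0 then W else ξ (i + 1)) μ)
    (hξ : ∀ w : ℕ, 2 ≤ w →
      (μ {ω | ξ w ω = 0}).toReal = α₁ * (w - 1) / (α * (w - 1) + β) ∧
      (μ {ω | ξ w ω = 1}).toReal = α₂ * (w - 1) / (α * (w - 1) + β) ∧
      (μ {ω | ξ w ω = 2}).toReal = β / (α * (w - 1) + β))
    (S : ℕ → Ω → ℕ)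
    (hS : ∀ w ω, S w ω = ∑ i ∈ Finset.Icc 1 w, ξ i ω) :
    (∀ w : ℕ, 2 ≤ w →
      ∫ ω, (ξ w ω : ℝ) ∂μ = α₂ / α + (α + α₁) * β / (α * (α * (w - 1) + β))) ∧
    ∃ C : ℝ, 0 < C ∧ ∀ w : ℕ, 2 ≤ w →
      |(∫ ω, (S w ω : ℝ) ∂μ) - (α₂ / α) * w| ≤ C * Real.log w := by
  have hαpos : 0 < α := by rw [hα]; linarith
  have hD : ∀ w : ℕ, 2 ≤ w → 0 < α * ((w : ℝ) - 1) + β := by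
    intro w hw
    have : (1 : ℝ) ≤ (w : ℝ) - 1 := by
      have : (2 : ℝ) ≤ (w : ℝ) := by exact_mod_cast hw
      linarith
    nlinarith
  -- per-ξ integrability and expectation
  have key : ∀ w : ℕ, 2 ≤ w →
      Integrable (fun ω => (ξ w ω : ℝ)) μ ∧
      ∫ ω, (ξ w ω : ℝ) ∂μ = α₂ / α + (α + α₁) * β / (α * (α * (w : ℝ) - α + β)) := by
    intro w hw
    obtain ⟨h0, h1, h2⟩ := hξ w hw
    have hDw := hD w hw
    have hDw' : α * ((w : ℝ) - 1) + β ≠ 0 := ne_of_gt hDw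
    have hsum : α₁ * ((w : ℝ) - 1) / (α * ((w : ℝ) - 1) + β)
        + α₂ * ((w : ℝ) - 1) / (α * ((w : ℝ) - 1) + β)
        + β / (α * ((w : ℝ) - 1) + β) = 1 := by
      rw [← add_div, ← add_div, div_eq_one_iff_eq hDw']
      rw [hα]; ring
    obtain ⟨hint, hval⟩ := aux_expect μ (ξ w) (hξmeas w) _ _ _ h0 h1 h2 hsum
    refine ⟨hint, ?_⟩
    rw [hval, show α * (w : ℝ) - α + β = α * ((w : ℝ) - 1) + β from by ring]
    rw [hα] at hDw' ⊢
    have hα' : α₁ + α₂ ≠ 0 := by linarith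
    rw [mul_div_assoc', ← add_div, div_add_div _ _ hα' (mul_ne_zero hα' hDw'),
      div_eq_div_iff hDw' (mul_ne_zero hα' (mul_ne_zero hα' hDw'))]
    ring
  constructor
  · intro w hw
    have := (key w hw).2
    convert this using 3
    ring
  -- second part
  set K : ℝ := (α + α₁) * β / α ^ 2 with hK
  have hKpos : 0 < K := by
    apply div_pos
    · apply mul_pos _ hβ; linarith
    · positivity
  set A : ℝ := |2 - α₂ / α| + K with hAdef
  have hApos : 0 < A := by
    have : 0 ≤ |2 - α₂ / α| := abs_nonneg _
    rw [hAdef]; linarith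
  have hlog2 : 0 < Real.log 2 := Real.log_pos (by norm_num)
  refine ⟨A / Real.log 2 + K, by positivity, ?_⟩
  intro w hw
  have hw1 : 1 ≤ w := by omega
  -- integrability of ξ 1
  have hξ1' : (fun _ : Ω => (2 : ℝ)) =ᵐ[μ] (fun ω => (ξ 1 ω : ℝ)) := by
    filter_upwards [hξ1] with ω hω; rw [hω]; norm_num
  have hint1 : Integrable (fun ω => (ξ 1 ω : ℝ)) μ := (integrable_const (2 : ℝ)).congr hξ1'
  have hE1 : ∫ ω, (ξ 1 ω : ℝ) ∂μ = 2 := by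
    rw [← integral_congr_ae hξ1']; simp
  -- expectation of S w
  have hScast : (fun ω => (S w ω : ℝ)) = fun ω => ∑ i ∈ Finset.Icc 1 w, (ξ i ω : ℝ) := by
    funext ω; rw [hS]; push_cast; ring
  have hins : Finset.Icc 1 w = insert 1 (Finset.Icc 2 w) := by
    ext i; simp only [Finset.mem_Icc, Finset.mem_insert]; omega
  have hintall : ∀ i ∈ Finset.Icc 1 w, Integrable (fun ω => (ξ i ω : ℝ)) μ := by
    intro i hi
    rcases Nat.lt_or_ge i 2 with hi2 | hi2
    · have : i = 1 := by simp [Finset.mem_Icc] at hi; omega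
      rw [this]; exact hint1
    · exact (key i hi2).1
  have hES : ∫ ω, (S w ω : ℝ) ∂μ
      = 2 + ∑ i ∈ Finset.Icc 2 w, ∫ ω, (ξ i ω : ℝ) ∂μ := by
    rw [hScast, integral_finset_sum _ hintall, hins,
      Finset.sum_insert (by simp), hE1]
  have hsum2 : ∑ i ∈ Finset.Icc 2 w, ∫ ω, (ξ i ω : ℝ) ∂μ
      = (↑(w - 1) : ℝ) * (α₂ / α)
        + ∑ i ∈ Finset.Icc 2 w, (α + α₁) * β / (α * (α * (i : ℝ) - α + β)) := by
    rw [Finset.sum_congr rfl (fun i hi => (key i (Finset.mem_Icc.mp hi).1).2),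
      Finset.sum_add_distrib, Finset.sum_const, Nat.card_Icc]
    simp only [nsmul_eq_mul]
    have : w + 1 - 2 = w - 1 := by omega
    rw [this]
  set T : ℝ := ∑ i ∈ Finset.Icc 2 w, (α + α₁) * β / (α * (α * (i : ℝ) - α + β)) with hT
  have hTnonneg : 0 ≤ T := by
    apply Finset.sum_nonneg
    intro i hi
    have hi2 := (Finset.mem_Icc.mp hi).1
    have := hD i hi2
    have : 0 < α * (i : ℝ) - α + β := by nlinarith [hD i hi2]
    positivity
  -- bound T
  have hTle : T ≤ K * (1 + Real.log w) := by
    have step1 : T ≤ ∑ i ∈ Finset.Icc 2 w, K * ((i : ℝ) - 1)⁻¹ := by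
      apply Finset.sum_le_sum
      intro i hi
      have hi2 := (Finset.mem_Icc.mp hi).1
      have hi1 : (1 : ℝ) ≤ (i : ℝ) - 1 := by
        have : (2 : ℝ) ≤ (i : ℝ) := by exact_mod_cast hi2
        linarith
      have hx : K * ((i : ℝ) - 1)⁻¹ = (α + α₁) * β / (α ^ 2 * ((i : ℝ) - 1)) := by
        rw [hK]; field_simp
      rw [hx]
      apply div_le_div_of_nonneg_left (by positivity) (by positivity)
      nlinarith
    have step2 : ∑ i ∈ Finset.Icc 2 w, K * ((i : ℝ) - 1)⁻¹
        = K * ∑ d ∈ Finset.Icc 1 (w - 1), ((d : ℝ))⁻¹ := by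
      rw [← Finset.mul_sum]
      congr 1
      apply Finset.sum_nbij' (i := fun i => i - 1) (j := fun d => d + 1)
      · intro a ha; simp only [Finset.mem_Icc] at *; omega
      · intro a ha; simp only [Finset.mem_Icc] at *; omega
      · intro a ha; simp only [Finset.mem_Icc] at ha; omega
      · intro a ha; omega
      · intro a ha
        simp only [Finset.mem_Icc] at ha
        have : ((a - 1 : ℕ) : ℝ) = (a : ℝ) - 1 := by
          have : (1 : ℕ) ≤ a := by omega
          push_cast [Nat.cast_sub this]; ring
        rw [this]
    have step3 : ∑ d ∈ Finset.Icc 1 (w - 1), ((d : ℝ))⁻¹ ≤ 1 + Real.log (w - 1 : ℕ) := by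
      have := harmonic_le_one_add_log (w - 1)
      rw [harmonic_eq_sum_Icc] at this
      push_cast at this ⊢
      exact this
    have step4 : Real.log ((w - 1 : ℕ) : ℝ) ≤ Real.log w := by
      apply Real.log_le_log (by norm_num; omega : (0:ℝ) < ((w-1:ℕ):ℝ))
      exact_mod_cast Nat.sub_le w 1
    calc T ≤ K * ∑ d ∈ Finset.Icc 1 (w - 1), ((d : ℝ))⁻¹ := by rw [← step2]; exact step1
      _ ≤ K * (1 + Real.log w) := by
          apply mul_le_mul_of_nonneg_left _ hKpos.le
          exact step3.trans (by linarith)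
  -- assemble
  have hw2r : (2 : ℝ) ≤ (w : ℝ) := by exact_mod_cast hw
  have hlogw : Real.log 2 ≤ Real.log w := Real.log_le_log (by norm_num) hw2r
  have hlogwpos : 0 < Real.log w := lt_of_lt_of_le hlog2 hlogw
  have hdiff : (∫ ω, (S w ω : ℝ) ∂μ) - (α₂ / α) * w = (2 - α₂ / α) + T := by
    rw [hES, hsum2]
    have : ((w - 1 : ℕ) : ℝ) = (w : ℝ) - 1 := by
      push_cast [Nat.cast_sub hw1]; ring
    rw [this]; ring
  rw [hdiff]
  calc |2 - α₂ / α + T| ≤ |2 - α₂ / α| + T := by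
        rw [abs_le]; constructor
        · have := neg_abs_le (2 - α₂ / α); linarith
        · have := le_abs_self (2 - α₂ / α); linarith
    _ ≤ |2 - α₂ / α| + K * (1 + Real.log w) := by linarith
    _ = A + K * Real.log w := by rw [hAdef]; ring
    _ ≤ (A / Real.log 2) * Real.log w + K * Real.log w := by
        have : A = (A / Real.log 2) * Real.log 2 := by field_simp
        nlinarith [div_pos hApos hlog2]
    _ = (A / Real.log 2 + K) * Real.log w := by ring
end

section
/- There is a constant C > 0 such that |Var(S_w) − (α₁α₂/α²)·w| ≤ C·log w for every integer w ≥ 2. -/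
open MeasureTheory ProbabilityTheory

lemma my_variance_congr {Ω : Type*} [MeasurableSpace Ω] {μ : Measure Ω} {X Y : Ω → ℝ}
    (h : X =ᵐ[μ] Y) : variance X μ = variance Y μ := by
  have hm : μ[X] = μ[Y] := integral_congr_ae h
  simp only [variance, evariance, hm]
  congr 1
  apply lintegral_congr_ae
  filter_upwards [h] with ω hω
  rw [hω]

lemma my_variance_const_add {Ω : Type*} [MeasurableSpace Ω] {μ : Measure Ω}
    [IsProbabilityMeasure μ] (c : ℝ) {f : Ω → ℝ} (hf : Integrable f μ) :
    variance (fun ω => c + f ω) μ = variance f μ := by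
  have hint : μ[fun ω => c + f ω] = c + μ[f] := by
    rw [integral_add (integrable_const c) hf, integral_const]
    simp
  simp only [variance, evariance, hint]
  congr 1
  apply lintegral_congr
  intro ω
  congr 2
  ring

lemma my_key (α₁ α₂ β α : ℝ) (hα₁ : 0 < α₁) (hα₂ : 0 < α₂) (hβ : 0 < β)
    (hα : α = α₁ + α₂) (t : ℝ) (ht : 1 ≤ t) :
    |(α₂*t + 4*β)/(α*t+β) - ((α₂*t + 2*β)/(α*t+β))^2 - α₁*α₂/α^2|
      ≤ ((β*(α^2*(4*α₁+α₂) + 2*α*α₁*α₂) + α₁*α₂*β^2)/α^4) / t := by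
  have hα0 : 0 < α := by rw [hα]; linarith
  have ht0 : 0 < t := by linarith
  have hD : 0 < α*t+β := by positivity
  set A : ℝ := α^2*(4*α₁+α₂) - 2*α*α₁*α₂ with hA
  set B : ℝ := β*(α^2*(4*α₁+α₂) + 2*α*α₁*α₂) + α₁*α₂*β^2 with hB
  set N : ℝ := β*t*A - α₁*α₂*β^2 with hNdef
  have heq : (α₂*t + 4*β)/(α*t+β) - ((α₂*t + 2*β)/(α*t+β))^2 - α₁*α₂/α^2
      = N / (α^2*(α*t+β)^2) := by
    rw [hNdef, hA, hα]
    field_simp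
    ring
  have hB0 : 0 < B := by rw [hB]; positivity
  have h1 : (0:ℝ) < β*t*(α^2*(4*α₁+α₂)) := by positivity
  have h2 : (0:ℝ) ≤ α₁*α₂*β^2*(t-1) := by
    apply mul_nonneg (by positivity); linarith
  have h3 : (0:ℝ) < β*t*(4*α*α₁*α₂) := by positivity
  have h4 : (0:ℝ) ≤ α₁*α₂*β^2*(t+1) := by positivity
  have hN : |N| ≤ B*t := by
    rw [abs_le]
    constructor
    · rw [hNdef, hA, hB]; nlinarith [h1, h2]
    · rw [hNdef, hA, hB]; nlinarith [h3, h4]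
  rw [heq, abs_div, abs_of_pos (by positivity : (0:ℝ) < α^2*(α*t+β)^2)]
  have hfin : |N| / (α^2*(α*t+β)^2) ≤ (B*t) / (α^2*(α*t)^2) := by
    gcongr
    all_goals first | positivity | exact hN | nlinarith [sq_nonneg (α*t), mul_pos hα0 ht0]
  refine hfin.trans (le_of_eq ?_)
  field_simp

lemma my_moment {Ω : Type*} [MeasurableSpace Ω] (μ : Measure Ω) [IsProbabilityMeasure μ]
    (Y : Ω → ℕ) (hY : Measurable Y) (hsupp : ∀ᵐ ω ∂μ, Y ω ≤ 2) (f : ℕ → ℝ) :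
    ∫ ω, f (Y ω) ∂μ = f 0 * (μ {ω | Y ω = 0}).toReal + f 1 * (μ {ω | Y ω = 1}).toReal
      + f 2 * (μ {ω | Y ω = 2}).toReal := by
  have hA : ∀ k : ℕ, MeasurableSet {ω | Y ω = k} := fun k => hY (measurableSet_singleton k)
  have hae : (fun ω => f (Y ω)) =ᵐ[μ] (fun ω =>
      ({ω | Y ω = 0}).indicator (fun _ => f 0) ω + ({ω | Y ω = 1}).indicator (fun _ => f 1) ω
        + ({ω | Y ω = 2}).indicator (fun _ => f 2) ω) := by
    filter_upwards [hsupp] with ω hω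
    have h3 : Y ω = 0 ∨ Y ω = 1 ∨ Y ω = 2 := by omega
    rcases h3 with h | h | h <;>
      simp [Set.indicator_apply, Set.mem_setOf_eq, h]
  rw [integral_congr_ae hae]
  have hi : ∀ k : ℕ, Integrable (({ω | Y ω = k}).indicator (fun _ => f k)) μ :=
    fun k => (integrable_const (f k)).indicator (hA k)
  rw [integral_add (((hi 0).add (hi 1)) : Integrable (fun a => _ + _) μ) (hi 2),
    integral_add (hi 0) (hi 1),
    integral_indicator_const _ (hA 0), integral_indicator_const _ (hA 1),
    integral_indicator_const _ (hA 2)]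
  simp [mul_comm]
  rfl

/-- `|Var(S_w) - (α₁α₂/α²)w| ≤ C log w` for some constant `C > 0` and all `w ≥ 2`. -/
theorem stmt_8 (α₁ α₂ β : ℝ) (hα₁ : 0 < α₁) (hα₂ : 0 < α₂) (hβ : 0 < β)
    (α : ℝ) (hα : α = α₁ + α₂)
    (x : ℕ → ℝ) (hx1 : x 1 = 1 / (α + β + 1))
    (hxrec : ∀ w : ℕ, 2 ≤ w →
      x w = (α * (w - 1) + β) / (α * w + β + 1) * x (w - 1))
    {Ω : Type*} [MeasurableSpace Ω] (μ : Measure Ω) [IsProbabilityMeasure μ]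
    (W : Ω → ℕ) (ξ : ℕ → Ω → ℕ)
    (hWmeas : Measurable W) (hξmeas : ∀ i, Measurable (ξ i))
    (hW : ∀ w : ℕ, 1 ≤ w → (μ {ω | W ω = w}).toReal = x w)
    (hξ1 : ∀ᵐ ω ∂μ, ξ 1 ω = 2)
    (hindep : iIndepFun
      (fun i : ℕ => if i = 0 then W else ξ (i + 1)) μ)
    (hξ : ∀ w : ℕ, 2 ≤ w →
      (μ {ω | ξ w ω = 0}).toReal = α₁ * (w - 1) / (α * (w - 1) + β) ∧
      (μ {ω | ξ w ω = 1}).toReal = α₂ * (w - 1) / (α * (w - 1) + β) ∧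
      (μ {ω | ξ w ω = 2}).toReal = β / (α * (w - 1) + β))
    (S : ℕ → Ω → ℕ)
    (hS : ∀ w ω, S w ω = ∑ i ∈ Finset.Icc 1 w, ξ i ω) :
    ∃ C : ℝ, 0 < C ∧ ∀ w : ℕ, 2 ≤ w →
      |variance (fun ω => (S w ω : ℝ)) μ - (α₁ * α₂ / α ^ 2) * w| ≤ C * Real.log w := by
  have hα0 : 0 < α := by rw [hα]; linarith
  set c : ℝ := α₁ * α₂ / α ^ 2 with hc
  set K : ℝ := (β*(α^2*(4*α₁+α₂) + 2*α*α₁*α₂) + α₁*α₂*β^2)/α^4 with hK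
  have hc0 : 0 < c := by rw [hc]; positivity
  have hK0 : 0 < K := by rw [hK]; positivity
  have hlog2 : 0 < Real.log 2 := Real.log_pos (by norm_num)
  have hcastmeas : Measurable (fun n : ℕ => (n:ℝ)) := measurable_from_top
  -- a.e. support of ξ i
  have hsupp : ∀ i : ℕ, 2 ≤ i → ∀ᵐ ω ∂μ, ξ i ω ≤ 2 := by
    intro i hi
    obtain ⟨hp0, hp1, hp2⟩ := hξ i hi
    have hi2 : (2:ℝ) ≤ (i:ℝ) := by exact_mod_cast hi
    have hD : (0:ℝ) < α * ((i:ℝ)-1) + β := by nlinarith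
    have hA : ∀ k : ℕ, MeasurableSet {ω | ξ i ω = k} :=
      fun k => (hξmeas i) (measurableSet_singleton k)
    have hd01 : Disjoint {ω | ξ i ω = 0} {ω | ξ i ω = 1} := by
      rw [Set.disjoint_left]; intro ω h0 h1
      simp only [Set.mem_setOf_eq] at h0 h1; omega
    have hd012 : Disjoint ({ω | ξ i ω = 0} ∪ {ω | ξ i ω = 1}) {ω | ξ i ω = 2} := by
      rw [Set.disjoint_left]; intro ω h0 h1
      simp only [Set.mem_union, Set.mem_setOf_eq] at h0 h1; omega
    have hU : μ ({ω | ξ i ω = 0} ∪ {ω | ξ i ω = 1} ∪ {ω | ξ i ω = 2}) = 1 := by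
      rw [measure_union hd012 (hA 2), measure_union hd01 (hA 1),
        ← ENNReal.toReal_eq_one_iff,
        ENNReal.toReal_add (by finiteness) (by finiteness),
        ENNReal.toReal_add (by finiteness) (by finiteness),
        hp0, hp1, hp2, ← add_div, ← add_div, div_eq_one_iff_eq hD.ne']
      rw [hα]; ring
    have hcompl : μ ({ω | ξ i ω = 0} ∪ {ω | ξ i ω = 1} ∪ {ω | ξ i ω = 2})ᶜ = 0 := by
      rw [measure_compl (((hA 0).union (hA 1)).union (hA 2)) (measure_ne_top _ _), hU,
        measure_univ, tsub_self]
    have hae := measure_eq_zero_iff_ae_notMem.mp hcompl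
    filter_upwards [hae] with ω hω
    simp only [Set.mem_compl_iff, Set.mem_union, Set.mem_setOf_eq, not_not] at hω
    omega
  -- L² membership
  have hmem : ∀ i : ℕ, 2 ≤ i → MemLp (fun ω => (ξ i ω : ℝ)) 2 μ := by
    intro i hi
    have hms : AEStronglyMeasurable (fun ω => (ξ i ω:ℝ)) μ :=
      (hcastmeas.comp (hξmeas i)).aestronglyMeasurable
    apply MemLp.of_bound hms 2
    filter_upwards [hsupp i hi] with ω hω
    rw [Real.norm_eq_abs, abs_of_nonneg (Nat.cast_nonneg _)]
    exact_mod_cast hω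
  -- variance of each ξ i
  have hvar : ∀ i : ℕ, 2 ≤ i → variance (fun ω => (ξ i ω : ℝ)) μ
      = (α₂*((i:ℝ)-1) + 4*β)/(α*((i:ℝ)-1)+β)
        - ((α₂*((i:ℝ)-1) + 2*β)/(α*((i:ℝ)-1)+β))^2 := by
    intro i hi
    obtain ⟨hp0, hp1, hp2⟩ := hξ i hi
    have hi2 : (2:ℝ) ≤ (i:ℝ) := by exact_mod_cast hi
    have hD : (0:ℝ) < α * ((i:ℝ)-1) + β := by nlinarith
    rw [variance_eq_sub (hmem i hi)]
    have h1 : μ[fun ω => (ξ i ω:ℝ)] = (α₂*((i:ℝ)-1) + 2*β)/(α*((i:ℝ)-1)+β) := by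
      have hm := my_moment μ (ξ i) (hξmeas i) (hsupp i hi) (fun n => (n:ℝ))
      rw [hm, hp0, hp1, hp2]
      have hDne : α * ((i:ℝ)-1) + β ≠ 0 := hD.ne'
      push_cast
      field_simp
      try ring
    have h2 : μ[(fun ω => (ξ i ω:ℝ)) ^ 2] = (α₂*((i:ℝ)-1) + 4*β)/(α*((i:ℝ)-1)+β) := by
      have hm := my_moment μ (ξ i) (hξmeas i) (hsupp i hi) (fun n => (n:ℝ)^2)
      simp only [Pi.pow_apply]
      rw [show (∫ ω, (fun ω => (ξ i ω:ℝ)) ω ^ 2 ∂μ) = ∫ ω, ((ξ i ω:ℝ))^2 ∂μ from rfl, hm,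
        hp0, hp1, hp2]
      have hDne : α * ((i:ℝ)-1) + β ≠ 0 := hD.ne'
      push_cast
      field_simp
      try ring
      try exact Or.inl trivial
    rw [h1, h2]
  -- pairwise independence
  have hbase : ∀ i j : ℕ, 2 ≤ i → 2 ≤ j → i ≠ j →
      IndepFun (fun ω => (ξ i ω:ℝ)) (fun ω => (ξ j ω:ℝ)) μ := by
    intro i j hi hj hij
    have h := hindep.indepFun (show i - 1 ≠ j - 1 by omega)
    simp only [if_neg (show ¬ i - 1 = 0 by omega), if_neg (show ¬ j - 1 = 0 by omega)] at h
    rw [show i - 1 + 1 = i by omega, show j - 1 + 1 = j by omega] at h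
    exact h.comp hcastmeas hcastmeas
  refine ⟨K + (K + c + 1)/Real.log 2 + 1, by positivity, ?_⟩
  intro w hw
  -- rewrite the variance of S w
  have hS' : (fun ω => (S w ω:ℝ)) =ᵐ[μ]
      (fun ω => 2 + ∑ i ∈ Finset.Icc 2 w, (ξ i ω:ℝ)) := by
    filter_upwards [hξ1] with ω h1
    rw [hS]
    push_cast
    rw [show Finset.Icc 1 w = insert 1 (Finset.Icc 2 w) by
        ext k; simp only [Finset.mem_Icc, Finset.mem_insert]; omega,
      Finset.sum_insert (by simp [Finset.mem_Icc]), h1]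
    norm_num
  have hsumfun : (fun ω => ∑ i ∈ Finset.Icc 2 w, (ξ i ω:ℝ))
      = ∑ i ∈ Finset.Icc 2 w, (fun ω => (ξ i ω:ℝ)) := by
    ext ω; simp
  have hvarS : variance (fun ω => (S w ω : ℝ)) μ
      = ∑ i ∈ Finset.Icc 2 w, variance (fun ω => (ξ i ω:ℝ)) μ := by
    rw [my_variance_congr hS', my_variance_const_add 2 ?_, hsumfun]
    · exact IndepFun.variance_sum
        (fun i hi => hmem i ((Finset.mem_Icc.mp hi).1))
        (fun i hi j hj hij => hbase i j ((Finset.mem_Icc.mp (Finset.mem_coe.mp hi)).1)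
          ((Finset.mem_Icc.mp (Finset.mem_coe.mp hj)).1) hij)
    · rw [hsumfun]
      exact (memLp_finset_sum' _ (fun i hi => hmem i ((Finset.mem_Icc.mp hi).1))).integrable
        one_le_two
  -- per-term bound
  have hterm : ∀ i ∈ Finset.Icc 2 w, |variance (fun ω => (ξ i ω:ℝ)) μ - c|
      ≤ K * (1/((i:ℝ)-1)) := by
    intro i hi
    have hi2 := (Finset.mem_Icc.mp hi).1
    have hi2' : (2:ℝ) ≤ (i:ℝ) := by exact_mod_cast hi2
    rw [hvar i hi2, hc, hK, mul_one_div]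
    exact my_key α₁ α₂ β α hα₁ hα₂ hβ hα ((i:ℝ)-1) (by linarith)
  -- harmonic sum bound
  have hw1 : 1 ≤ w - 1 := by omega
  have hharm : ∑ i ∈ Finset.Icc 2 w, (1:ℝ)/((i:ℝ)-1) ≤ 1 + Real.log w := by
    have e1 : ∑ i ∈ Finset.Icc 2 w, (1:ℝ)/((i:ℝ)-1)
        = ∑ j ∈ Finset.range (w-1), ((j+1:ℕ):ℝ)⁻¹ := by
      apply Finset.sum_nbij' (fun i => i - 2) (fun j => j + 2)
      · intro a ha; simp only [Finset.mem_Icc] at ha; simp only [Finset.mem_range]; omega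
      · intro a ha; simp only [Finset.mem_range] at ha; simp only [Finset.mem_Icc]; omega
      · intro a ha; simp only [Finset.mem_Icc] at ha; omega
      · intro a ha; simp only [Finset.mem_range] at ha; omega
      · intro a ha
        simp only [Finset.mem_Icc] at ha
        rw [one_div, show a - 2 + 1 = a - 1 by omega, Nat.cast_sub (by omega), Nat.cast_one]
    have e2 : ((harmonic (w-1) : ℚ) : ℝ) = ∑ j ∈ Finset.range (w-1), ((j+1:ℕ):ℝ)⁻¹ := by
      rw [harmonic]
      push_cast
      rfl
    rw [e1, ← e2]
    refine (harmonic_le_one_add_log (w-1)).trans ?_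
    have : Real.log ((w-1:ℕ):ℝ) ≤ Real.log w := by
      apply Real.log_le_log
      · exact_mod_cast hw1
      · exact_mod_cast Nat.sub_le w 1
    linarith
  have hcard : ((Finset.Icc 2 w).card : ℝ) = (w:ℝ) - 1 := by
    rw [Nat.card_Icc, show w + 1 - 2 = w - 1 by omega, Nat.cast_sub (by omega), Nat.cast_one]
  have step1 : variance (fun ω => (S w ω:ℝ)) μ - c * w
      = (∑ i ∈ Finset.Icc 2 w, (variance (fun ω => (ξ i ω:ℝ)) μ - c)) - c := by
    rw [hvarS, Finset.sum_sub_distrib, Finset.sum_const, nsmul_eq_mul, hcard]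
    ring
  have hwlog : Real.log 2 ≤ Real.log w := by
    apply Real.log_le_log (by norm_num)
    exact_mod_cast hw
  have hlogw0 : 0 ≤ Real.log w := le_trans hlog2.le hwlog
  have h6 : K + c + 1 ≤ (K + c + 1)/Real.log 2 * Real.log w := by
    rw [div_mul_eq_mul_div, le_div_iff₀ hlog2]
    have := mul_le_mul_of_nonneg_left hwlog (by positivity : (0:ℝ) ≤ K + c + 1)
    linarith
  have hchain : |variance (fun ω => (S w ω:ℝ)) μ - c * w| ≤ K * (1 + Real.log w) + c := by
    rw [step1]
    calc |(∑ i ∈ Finset.Icc 2 w, (variance (fun ω => (ξ i ω:ℝ)) μ - c)) - c|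
        ≤ |∑ i ∈ Finset.Icc 2 w, (variance (fun ω => (ξ i ω:ℝ)) μ - c)| + |c| := abs_sub _ _
      _ ≤ (∑ i ∈ Finset.Icc 2 w, |variance (fun ω => (ξ i ω:ℝ)) μ - c|) + c := by
          rw [abs_of_pos hc0]
          exact add_le_add_left (Finset.abs_sum_le_sum_abs _ _) c
      _ ≤ (∑ i ∈ Finset.Icc 2 w, K * (1/((i:ℝ)-1))) + c :=
          add_le_add_left (Finset.sum_le_sum hterm) c
      _ = K * (∑ i ∈ Finset.Icc 2 w, (1:ℝ)/((i:ℝ)-1)) + c := by rw [← Finset.mul_sum]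
      _ ≤ K * (1 + Real.log w) + c :=
          add_le_add_left (mul_le_mul_of_nonneg_left hharm hK0.le) c
  calc |variance (fun ω => (S w ω:ℝ)) μ - c * w| ≤ K * (1 + Real.log w) + c := hchain
    _ ≤ (K + (K + c + 1)/Real.log 2 + 1) * Real.log w := by nlinarith [h6, hlogw0]
end

section
/- The sequence n^{−(γ + δ/p)} · ∏_{i=1}^{n−1} ( 1 − γ/i − δ/v_{i−1} )^{−1} converges, as n → ∞, to a positive real number. -/
open Real Filter

set_option maxHeartbeats 1000000

/-- The normalizing sequence `n^{-(γ+δ/p)} ∏_{i=1}^{n-1} (1 - γ/i - δ/v_{i-1})⁻¹`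
converges to a positive limit, whenever `v_i = p·i + o(i^{1/2+ε})`. -/
theorem stmt_15 (p γ δ ε : ℝ) (hp : 0 < p) (hp' : p ≤ 1) (hγ : 0 < γ) (hδ : 0 < δ)
    (hε : 0 < ε) (hε' : ε < 1 / 2)
    (v : ℕ → ℝ) (hv : ∀ i, 0 < v i)
    (hvp : Tendsto (fun i : ℕ => (v i - p * i) / (i : ℝ) ^ ((1 : ℝ) / 2 + ε))
      atTop (nhds 0))
    (hpos : ∀ i : ℕ, 1 ≤ i → 0 < 1 - γ / i - δ / v (i - 1)) :
    ∃ L : ℝ, 0 < L ∧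
      Tendsto (fun n : ℕ =>
          (n : ℝ) ^ (-(γ + δ / p)) *
            (∏ i ∈ Finset.Icc 1 (n - 1), (1 - γ / i - δ / v (i - 1)))⁻¹)
        atTop (nhds L) := by
  obtain ⟨c, hc⟩ : ∃ c : ℝ, c = γ + δ / p := ⟨_, rfl⟩
  obtain ⟨K, hK⟩ : ∃ K : ℝ, K = γ + 4 * δ / p := ⟨_, rfl⟩
  obtain ⟨C, hC⟩ : ∃ C : ℝ, C = 2 * K ^ 2 + 4 * δ * (p + 1) / p ^ 2 := ⟨_, rfl⟩
  have hKpos : 0 < K := by rw [hK]; positivity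
  set b : ℕ → ℝ := fun i => -Real.log (1 - γ / i - δ / v (i - 1)) - c / i with hbdef
  -- eventual bound on v
  have hvev : ∀ᶠ i : ℕ in atTop, (p / 2) * i ≤ v i ∧ |v i - p * i| ≤ (i : ℝ) ^ ((1:ℝ)/2 + ε) := by
    have hmin : (0:ℝ) < min (p/2) 1 := by positivity
    have h1 := (Metric.tendsto_nhds.mp hvp) _ hmin
    filter_upwards [h1, eventually_ge_atTop 1] with i hi hi1
    have hx1 : (1:ℝ) ≤ (i:ℝ) := by exact_mod_cast hi1
    have hxpos : (0:ℝ) < (i:ℝ) := by linarith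
    have hqpos : (0:ℝ) < (i:ℝ) ^ ((1:ℝ)/2 + ε) := Real.rpow_pos_of_pos hxpos _
    rw [Real.dist_eq, sub_zero, abs_div, abs_of_pos hqpos, div_lt_iff₀ hqpos] at hi
    have hle : (i:ℝ) ^ ((1:ℝ)/2 + ε) ≤ (i:ℝ) := by
      calc (i:ℝ) ^ ((1:ℝ)/2 + ε) ≤ (i:ℝ) ^ (1:ℝ) :=
            Real.rpow_le_rpow_of_exponent_le hx1 (by linarith)
        _ = (i:ℝ) := Real.rpow_one _
    constructor
    · have h2 : |v i - p * i| ≤ (p/2) * (i:ℝ) := by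
        have h3 : min (p/2) 1 * (i:ℝ) ^ ((1:ℝ)/2 + ε) ≤ (p/2) * (i:ℝ) :=
          mul_le_mul (min_le_left _ _) hle (le_of_lt hqpos) (by positivity)
        linarith
      have := abs_le.mp h2
      nlinarith [this.1]
    · have h3 : min (p/2) 1 * (i:ℝ) ^ ((1:ℝ)/2 + ε) ≤ (i:ℝ) ^ ((1:ℝ)/2 + ε) := by
        have := mul_le_mul_of_nonneg_right (min_le_right (p/2) (1:ℝ)) (le_of_lt hqpos)
        linarith
      linarith
  -- eventual bound on b
  have hbbound : ∀ᶠ i : ℕ in atTop, ‖b i‖ ≤ C * (i:ℝ) ^ (ε - 3/2) := by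
    obtain ⟨N, hN⟩ := eventually_atTop.mp hvev
    rw [eventually_atTop]
    refine ⟨max (N + 2) (⌈2 * K⌉₊ + 2), fun i hi => ?_⟩
    have hiN : N ≤ i - 1 := by omega
    have hi2 : 2 ≤ i := by omega
    obtain ⟨hv1, hv2⟩ := hN (i - 1) hiN
    have hx2 : (2:ℝ) ≤ (i:ℝ) := by exact_mod_cast hi2
    have hx1 : (1:ℝ) ≤ (i:ℝ) := by linarith
    have hxpos : (0:ℝ) < (i:ℝ) := by linarith
    have hcast : ((i - 1 : ℕ) : ℝ) = (i:ℝ) - 1 := by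
      have : 1 ≤ i := by omega
      push_cast [this]; ring
    rw [hcast] at hv1 hv2
    have hiK : 2 * K ≤ (i:ℝ) := by
      have h4 : (⌈2 * K⌉₊ : ℝ) ≤ (i:ℝ) := by exact_mod_cast (by omega : ⌈2*K⌉₊ ≤ i)
      exact le_trans (Nat.le_ceil _) h4
    obtain ⟨w, hw⟩ : ∃ w : ℝ, w = v (i - 1) := ⟨_, rfl⟩
    rw [← hw] at hv1 hv2
    have hwpos : 0 < w := hw ▸ hv (i - 1)
    have hw4 : (p / 4) * (i:ℝ) ≤ w := by nlinarith
    have hw4pos : 0 < (p / 4) * (i:ℝ) := by positivity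
    obtain ⟨a, ha⟩ : ∃ a : ℝ, a = γ / i + δ / w := ⟨_, rfl⟩
    have hapos : 0 < a := by rw [ha]; positivity
    have h1a : 1 - γ / (i:ℝ) - δ / v (i-1) = 1 - a := by rw [ha, hw]; ring
    have ha1 : a < 1 := by
      have := hpos i (by omega)
      rw [h1a] at this; linarith
    have haK : a ≤ K / i := by
      have h1 : δ / w ≤ δ / ((p/4) * i) := div_le_div_of_nonneg_left (le_of_lt hδ) hw4pos hw4
      have h2 : δ / ((p/4) * i) = (4 * δ / p) / i := by field_simp
      rw [ha, hK, add_div]; rw [h2] at h1; linarith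
    have hahalf : a ≤ 1 / 2 := by
      have : K / i ≤ 1/2 := by rw [div_le_iff₀ hxpos]; linarith
      linarith
    -- term 1
    have hterm1 : |a + Real.log (1 - a)| ≤ 2 * (K / i) ^ 2 := by
      have habs : |a| < 1 := by rw [abs_of_pos hapos]; exact ha1
      have hlog := Real.abs_log_sub_add_sum_range_le habs 1
      simp only [Finset.sum_range_one, pow_one, Nat.cast_zero, zero_add, div_one] at hlog
      have hb1 : |a| ^ (1+1) / (1 - |a|) ≤ 2 * (K / i)^2 := by
        rw [abs_of_pos hapos]
        have h1 : 1 - a ≥ 1/2 := by linarith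
        have ha2 : a ^ 2 ≤ (K / i) ^ 2 := pow_le_pow_left₀ (le_of_lt hapos) haK 2
        have h5 : a ^ (1+1) / (1 - a) ≤ a ^ 2 / (1/2) :=
          div_le_div_of_nonneg_left (by positivity) (by norm_num) h1
        have h6 : a ^ 2 / (1/2) = 2 * a ^ 2 := by ring
        linarith
      exact le_trans hlog hb1
    -- term 2
    have hq : (0:ℝ) < (i:ℝ) ^ ((1:ℝ)/2 + ε) := Real.rpow_pos_of_pos hxpos _
    have hq1 : (1:ℝ) ≤ (i:ℝ) ^ ((1:ℝ)/2 + ε) := Real.one_le_rpow hx1 (by linarith)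
    have hmono : ((i:ℝ) - 1) ^ ((1:ℝ)/2 + ε) ≤ (i:ℝ) ^ ((1:ℝ)/2 + ε) :=
      Real.rpow_le_rpow (by linarith) (by linarith) (by linarith)
    have hterm2 : |a - c / i| ≤ (4 * δ * (p+1) / p^2) * ((i:ℝ) ^ ((1:ℝ)/2 + ε) / (i:ℝ)^2) := by
      have heq : a - c / i = δ * (p * i - w) / (w * (p * i)) := by
        rw [ha, hc]; field_simp; ring
      rw [heq, abs_div]
      have hnum : |δ * (p * i - w)| ≤ δ * ((p + 1) * (i:ℝ) ^ ((1:ℝ)/2 + ε)) := by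
        rw [abs_mul, abs_of_pos hδ]
        apply mul_le_mul_of_nonneg_left _ (le_of_lt hδ)
        have h1 : |p * i - w| ≤ p + |w - p * ((i:ℝ) - 1)| := by
          have h7 : p * (i:ℝ) - w = p - (w - p * ((i:ℝ) - 1)) := by ring
          rw [h7]
          have h8 := abs_sub p (w - p * ((i:ℝ)-1))
          rw [abs_of_pos hp] at h8
          exact h8
        nlinarith
      have hden : (p/4) * (i:ℝ) * (p * i) ≤ |w * (p * i)| := by
        rw [abs_of_pos (by positivity)]
        exact mul_le_mul_of_nonneg_right hw4 (by positivity)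
      have hdenpos : (0:ℝ) < (p/4) * (i:ℝ) * (p * i) := by positivity
      have h9 : |δ * (p * i - w)| / |w * (p * i)|
          ≤ (δ * ((p + 1) * (i:ℝ) ^ ((1:ℝ)/2 + ε))) / ((p/4) * (i:ℝ) * (p * i)) :=
        div_le_div₀ (by positivity) hnum hdenpos hden
      have h10 : (δ * ((p + 1) * (i:ℝ) ^ ((1:ℝ)/2 + ε))) / ((p/4) * (i:ℝ) * (p * i))
          = (4 * δ * (p+1) / p^2) * ((i:ℝ) ^ ((1:ℝ)/2 + ε) / (i:ℝ)^2) := by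
        field_simp
      linarith
    -- combine
    have hb2 : b i = -(a + Real.log (1 - a)) + (a - c / i) := by
      rw [hbdef]; simp only; rw [h1a]; ring
    have hrw1 : (i:ℝ) ^ ((1:ℝ)/2 + ε) / (i:ℝ)^2 = (i:ℝ) ^ (ε - 3/2) := by
      rw [← Real.rpow_natCast (i:ℝ) 2, ← Real.rpow_sub hxpos]
      congr 1
      push_cast
      ring
    have hrw2 : ((i:ℝ)⁻¹)^2 ≤ (i:ℝ) ^ (ε - 3/2) := by
      have h11 : ((i:ℝ)⁻¹)^2 = (i:ℝ) ^ (-2 : ℝ) := by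
        rw [Real.rpow_neg (le_of_lt hxpos), inv_pow]
        congr 1
        rw [← Real.rpow_natCast (i:ℝ) 2]
        norm_num
      rw [h11]
      exact Real.rpow_le_rpow_of_exponent_le hx1 (by linarith)
    rw [Real.norm_eq_abs, hb2]
    have habs2 : |(-(a + Real.log (1-a)) + (a - c/(i:ℝ)))| ≤ |a + Real.log (1-a)| + |a - c/(i:ℝ)| := by
      have := abs_add_le (-(a + Real.log (1-a))) (a - c/(i:ℝ))
      rw [abs_neg] at this; exact this
    have hfin : 2 * (K/(i:ℝ))^2 + (4 * δ * (p+1) / p^2) * ((i:ℝ) ^ ((1:ℝ)/2 + ε) / (i:ℝ)^2)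
        ≤ C * (i:ℝ) ^ (ε - 3/2) := by
      rw [hrw1, hC]
      have h1 : (K/i)^2 = K^2 * ((i:ℝ)⁻¹)^2 := by rw [div_pow]; ring
      nlinarith [Real.rpow_pos_of_pos hxpos (ε - 3/2), sq_nonneg K, hrw2,
        mul_le_mul_of_nonneg_left hrw2 (le_of_lt (mul_pos two_pos (mul_pos hKpos hKpos)))]
    linarith
  -- summability
  have hsummg : Summable (fun i : ℕ => C * (i:ℝ) ^ (ε - 3/2)) :=
    (Real.summable_nat_rpow.mpr (by linarith)).mul_left C
  have hsumb : Summable b := Summable.of_norm_bounded_eventually_nat hsummg hbbound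
  have hS := hsumb.hasSum.tendsto_sum_nat
  have hIcc : ∀ n : ℕ, 1 ≤ n →
      ∑ i ∈ Finset.Icc 1 (n-1), b i = (∑ i ∈ Finset.range n, b i) - b 0 := by
    intro n hn
    have h0 : Finset.range n = insert 0 (Finset.Icc 1 (n-1)) := by
      ext j
      simp only [Finset.mem_range, Finset.mem_insert, Finset.mem_Icc]
      omega
    rw [h0, Finset.sum_insert (by simp)]
    ring
  have hSn : Tendsto (fun n : ℕ => ∑ i ∈ Finset.Icc 1 (n-1), b i) atTop
      (nhds ((∑' i, b i) - b 0)) := by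
    apply (hS.sub_const (b 0)).congr'
    filter_upwards [eventually_ge_atTop 1] with n hn
    exact (hIcc n hn).symm
  have hGn : Tendsto (fun n : ℕ => (harmonic (n-1) : ℝ) - Real.log (((n-1 : ℕ):ℝ) + 1))
      atTop (nhds Real.eulerMascheroniConstant) :=
    Real.tendsto_harmonic_sub_log_add_one.comp (tendsto_sub_atTop_nat 1)
  refine ⟨Real.exp ((∑' i, b i) - b 0 + c * Real.eulerMascheroniConstant),
    Real.exp_pos _, ?_⟩
  have hcomb : Tendsto (fun n : ℕ =>
      Real.exp ((∑ i ∈ Finset.Icc 1 (n-1), b i)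
        + c * ((harmonic (n-1):ℝ) - Real.log (((n-1:ℕ):ℝ)+1)))) atTop
      (nhds (Real.exp ((∑' i, b i) - b 0 + c * Real.eulerMascheroniConstant))) :=
    (Real.continuous_exp.tendsto _).comp (hSn.add (hGn.const_mul c))
  apply hcomb.congr'
  filter_upwards [eventually_ge_atTop 1] with n hn
  have hn0 : (0:ℝ) < (n:ℝ) := by exact_mod_cast hn
  have hcastn : ((n-1:ℕ):ℝ) + 1 = (n:ℝ) := by
    rw [Nat.cast_sub hn]
    push_cast
    ring
  have hH : (harmonic (n-1) : ℝ) = ∑ i ∈ Finset.Icc 1 (n-1), ((i:ℝ))⁻¹ := by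
    rw [harmonic_eq_sum_Icc]
    push_cast
    ring
  have hprod : Real.exp (∑ i ∈ Finset.Icc 1 (n-1), Real.log (1 - γ/i - δ/v (i-1)))
      = ∏ i ∈ Finset.Icc 1 (n-1), (1 - γ/i - δ/v (i-1)) := by
    rw [Real.exp_sum]
    exact Finset.prod_congr rfl fun i hi => Real.exp_log (hpos i (Finset.mem_Icc.mp hi).1)
  have hsumb' : ∑ i ∈ Finset.Icc 1 (n-1), b i
      = -(∑ i ∈ Finset.Icc 1 (n-1), Real.log (1 - γ/i - δ/v (i-1)))
        - c * (harmonic (n-1):ℝ) := by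
    rw [hbdef, hH]
    simp only [div_eq_mul_inv]
    rw [Finset.sum_sub_distrib, Finset.sum_neg_distrib, ← Finset.mul_sum]
  calc Real.exp ((∑ i ∈ Finset.Icc 1 (n-1), b i)
        + c * ((harmonic (n-1):ℝ) - Real.log (((n-1:ℕ):ℝ)+1)))
      = Real.exp (Real.log (n:ℝ) * (-c))
        * Real.exp (-(∑ i ∈ Finset.Icc 1 (n-1), Real.log (1 - γ/i - δ/v (i-1)))) := by
        rw [hcastn, hsumb', ← Real.exp_add]
        congr 1
        ring
    _ = (n:ℝ) ^ (-(γ+δ/p)) * (∏ i ∈ Finset.Icc 1 (n-1), (1 - γ/i - δ/v (i-1)))⁻¹ := by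
        rw [Real.exp_neg, hprod, ← Real.rpow_def_of_pos hn0, hc]
end

section
/- For every integer k ≥ 1 the process Z_n = b[n,k]·C(W_n + k − 1, k) − d[n,k], defined for n ≥ ℓ, is a martingale with respect to the filtration (F_n)_{n≥ℓ}. -/
open MeasureTheory Filter

/-- For every `k ≥ 1`, the process `Z_n = b[n,k]·C(W_n+k-1, k) - d[n,k]`, `n ≥ ℓ`,
is a martingale with respect to the filtration `(F_n)_{n ≥ ℓ}`: it is adapted,
integrable, and `E[Z_n | F_m] = Z_m` for `ℓ ≤ m ≤ n`. -/
theorem stmt_16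
    {Ω : Type*} {m0 : MeasurableSpace Ω} (μ : Measure Ω) [IsProbabilityMeasure μ]
    (ℱ : Filtration ℕ m0) (ℓ : ℕ) (hℓ : 1 ≤ ℓ)
    (α β p : ℝ) (hα : 0 < α) (hβ : 0 < β) (hp : 0 < p) (hp' : p ≤ 1)
    (W : ℕ → Ω → ℕ) (V : ℕ → Ω → ℝ)
    (hWadapted : ∀ n, ℓ ≤ n → Measurable[ℱ n] (W n))
    (hWpos : ∀ n, ℓ ≤ n → ∀ ω, 1 ≤ W n ω)
    (hWbdd : ∃ M : ℕ, ∀ᵐ ω ∂μ, W ℓ ω ≤ M)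
    (hVadapted : ∀ n, ℓ ≤ n → Measurable[ℱ n] (V n))
    (hV3 : ∀ n, ℓ ≤ n → ∀ᵐ ω ∂μ, 3 ≤ V n ω)
    (hstep : ∀ n, ℓ ≤ n →
      (∀ᵐ ω ∂μ, W (n + 1) ω = W n ω ∨ W (n + 1) ω = W n ω + 1))
    (hcond : ∀ n, ℓ ≤ n →
      μ[Set.indicator {ω | W (n + 1) ω = W n ω + 1} (fun _ => (1 : ℝ)) | ℱ n]
        =ᵐ[μ] fun ω => α * W n ω / (n + 1) + β * p / V n ω)
    (b : ℕ → ℕ → ℝ)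
    (hb : ∀ n k, b n k = ∏ i ∈ Finset.Icc 1 n, (1 + α * k / i)⁻¹)
    (d : ℕ → ℕ → Ω → ℝ)
    (hd : ∀ n k ω, d n k ω = ∑ i ∈ Finset.Icc ℓ (n - 1),
      b (i + 1) k * (β * p / V i ω) * ((W i ω + k - 1).choose (k - 1) : ℝ))
    (Z : ℕ → ℕ → Ω → ℝ)
    (hZ : ∀ k n ω, Z k n ω = b n k * ((W n ω + k - 1).choose k : ℝ) - d n k ω) :
    ∀ k : ℕ, 1 ≤ k →
      (∀ n, ℓ ≤ n → StronglyMeasurable[ℱ n] (Z k n) ∧ Integrable (Z k n) μ) ∧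
      (∀ m n, ℓ ≤ m → m ≤ n → μ[Z k n | ℱ m] =ᵐ[μ] Z k m) := by
  obtain ⟨M, hM⟩ := hWbdd
  intro k hk
  -- basic facts about b
  have hbpos : ∀ n, 0 < b n k := by
    intro n; rw [hb]
    apply Finset.prod_pos
    intro i hi
    have hi1 : (1:ℕ) ≤ i := (Finset.mem_Icc.1 hi).1
    have : (0:ℝ) < 1 + α * k / i := by positivity
    exact inv_pos.2 this
  have hble : ∀ n, b n k ≤ 1 := by
    intro n; rw [hb]
    have h1 : ∀ i ∈ Finset.Icc 1 n, (0:ℝ) ≤ (1 + α * k / i)⁻¹ := fun i hi => by positivity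
    have h2 : ∀ i ∈ Finset.Icc 1 n, (1 + α * (k:ℝ) / i)⁻¹ ≤ 1 := fun i hi =>
      inv_le_one_of_one_le₀ (le_add_of_nonneg_right (by positivity))
    exact Finset.prod_le_one h1 h2
  have hbmul : ∀ n : ℕ, b (n + 1) k * (1 + α * k / ((n : ℝ) + 1)) = b n k := by
    intro n
    have hpos : (0:ℝ) < 1 + α * k / ((n:ℝ) + 1) := by positivity
    rw [hb (n+1), hb n, Finset.prod_Icc_succ_top (by omega : 1 ≤ n + 1)]
    push_cast
    field_simp
  -- a.e. bound on W
  have haWle : ∀ n, ℓ ≤ n → ∀ᵐ ω ∂μ, W n ω ≤ M + n := by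
    intro n hn
    induction n, hn using Nat.le_induction with
    | base => filter_upwards [hM] with ω h; omega
    | succ n hn ih =>
      filter_upwards [ih, hstep n hn] with ω h1 h2
      rcases h2 with h | h <;> omega
  -- measurability helpers
  have hchoosemeas : ∀ n, ℓ ≤ n → ∀ j : ℕ,
      Measurable[ℱ n] (fun ω => ((W n ω + k - 1).choose j : ℝ)) := by
    intro n hn j
    exact (measurable_from_top (f := fun m : ℕ => ((m + k - 1).choose j : ℝ))).comp
      (hWadapted n hn)
  have hdmeas : ∀ n, ℓ ≤ n → Measurable[ℱ n] (d n k) := by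
    intro n hn
    have hde : d n k = fun ω => ∑ i ∈ Finset.Icc ℓ (n - 1),
        b (i + 1) k * (β * p / V i ω) * ((W i ω + k - 1).choose (k - 1) : ℝ) :=
      funext (hd n k)
    rw [hde]
    apply Finset.measurable_sum
    intro i hi
    obtain ⟨hi1, hi2⟩ := Finset.mem_Icc.1 hi
    have hin : i ≤ n := le_trans hi2 (Nat.sub_le n 1)
    have hV : Measurable[ℱ n] (V i) := (hVadapted i hi1).mono (ℱ.mono hin) le_rfl
    have hcm : Measurable[ℱ n] (fun ω => ((W i ω + k - 1).choose (k - 1) : ℝ)) :=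
      (hchoosemeas i hi1 (k - 1)).mono (ℱ.mono hin) le_rfl
    exact ((measurable_const.div hV).const_mul _).mul hcm
  have hZmeas : ∀ n, ℓ ≤ n → Measurable[ℱ n] (Z k n) := by
    intro n hn
    have hZe : Z k n = fun ω => b n k * ((W n ω + k - 1).choose k : ℝ) - d n k ω :=
      funext (hZ k n)
    rw [hZe]
    exact ((hchoosemeas n hn k).const_mul _).sub (hdmeas n hn)
  -- a.e. bound on d
  have hdbd : ∀ n, ℓ ≤ n → ∀ᵐ ω ∂μ, |d n k ω| ≤
      (n : ℝ) * (β * p / 3 * (((M + n + k).choose (k - 1) : ℕ) : ℝ)) := by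
    intro n hn
    have hae : ∀ᵐ ω ∂μ, ∀ i ∈ Finset.Icc ℓ (n - 1), 3 ≤ V i ω ∧ W i ω ≤ M + i := by
      rw [Filter.eventually_all_finset]
      intro i hi
      obtain ⟨hi1, hi2⟩ := Finset.mem_Icc.1 hi
      filter_upwards [hV3 i hi1, haWle i hi1] with ω h1 h2 using ⟨h1, h2⟩
    filter_upwards [hae] with ω h
    rw [hd]
    have step1 : |∑ i ∈ Finset.Icc ℓ (n - 1),
        b (i + 1) k * (β * p / V i ω) * ((W i ω + k - 1).choose (k - 1) : ℝ)|
        ≤ ∑ i ∈ Finset.Icc ℓ (n - 1), β * p / 3 * (((M + n + k).choose (k - 1) : ℕ) : ℝ) := by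
      refine (Finset.abs_sum_le_sum_abs _ _).trans (Finset.sum_le_sum ?_)
      intro i hi
      obtain ⟨h3, hW⟩ := h i hi
      obtain ⟨hi1, hi2⟩ := Finset.mem_Icc.1 hi
      have hVpos : (0:ℝ) < V i ω := by linarith
      have hbnd : |b (i + 1) k * (β * p / V i ω) * ((W i ω + k - 1).choose (k - 1) : ℝ)|
          ≤ 1 * (β * p / 3) * (((M + n + k).choose (k - 1) : ℕ) : ℝ) := by
        rw [abs_mul, abs_mul, abs_of_pos (hbpos _), abs_of_pos (by positivity : (0:ℝ) < β * p / V i ω),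
          abs_of_nonneg (by positivity : (0:ℝ) ≤ ((W i ω + k - 1).choose (k - 1) : ℝ))]
        have hcle : ((W i ω + k - 1).choose (k - 1) : ℝ) ≤ (((M + n + k).choose (k - 1) : ℕ) : ℝ) := by
          exact_mod_cast Nat.choose_le_choose (k - 1) (by omega : W i ω + k - 1 ≤ M + n + k)
        gcongr
        exact hble _
      linarith
    refine step1.trans ?_
    rw [Finset.sum_const, nsmul_eq_mul]
    have hcard : ((Finset.Icc ℓ (n - 1)).card : ℝ) ≤ (n : ℝ) := by
      have : (Finset.Icc ℓ (n - 1)).card ≤ n := by rw [Nat.card_Icc]; omega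
      exact_mod_cast this
    exact mul_le_mul_of_nonneg_right hcard (by positivity)
  -- integrability
  have hZint : ∀ n, ℓ ≤ n → Integrable (Z k n) μ := by
    intro n hn
    have hbound : ∀ᵐ ω ∂μ, ‖Z k n ω‖ ≤
        (((M + n + k).choose k : ℕ) : ℝ) + (n : ℝ) * (β * p / 3 * (((M + n + k).choose (k - 1) : ℕ) : ℝ)) := by
      filter_upwards [hdbd n hn, haWle n hn] with ω h1 h2
      rw [Real.norm_eq_abs, hZ]
      have hbc : |b n k * ((W n ω + k - 1).choose k : ℝ)| ≤ (((M + n + k).choose k : ℕ) : ℝ) := by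
        rw [abs_mul, abs_of_pos (hbpos n),
          abs_of_nonneg (by positivity : (0:ℝ) ≤ ((W n ω + k - 1).choose k : ℝ))]
        have hcle : ((W n ω + k - 1).choose k : ℝ) ≤ (((M + n + k).choose k : ℕ) : ℝ) := by
          exact_mod_cast Nat.choose_le_choose k (by omega : W n ω + k - 1 ≤ M + n + k)
        calc b n k * ((W n ω + k - 1).choose k : ℝ)
            ≤ 1 * (((M + n + k).choose k : ℕ) : ℝ) := by
              gcongr
              · exact hble n
          _ = (((M + n + k).choose k : ℕ) : ℝ) := one_mul _
      have htri : |b n k * ((W n ω + k - 1).choose k : ℝ) - d n k ω|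
          ≤ |b n k * ((W n ω + k - 1).choose k : ℝ)| + |d n k ω| := abs_sub _ _
      linarith
    exact (integrable_const _).mono'
      ((hZmeas n hn).mono (ℱ.le n) le_rfl).aestronglyMeasurable hbound
  -- one-step martingale property
  have onestep : ∀ n, ℓ ≤ n → μ[Z k (n + 1) | ℱ n] =ᵐ[μ] Z k n := by
    intro n hn
    have hWn1 : Measurable (W (n + 1)) := (hWadapted (n + 1) (by omega)).mono (ℱ.le (n + 1)) le_rfl
    have hWn : Measurable (W n) := (hWadapted n hn).mono (ℱ.le n) le_rfl
    have hAmeas : MeasurableSet {ω | W (n + 1) ω = W n ω + 1} :=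
      measurableSet_eq_fun hWn1 (hWn.add measurable_const)
    have hfint : Integrable (Set.indicator {ω | W (n + 1) ω = W n ω + 1} (fun _ => (1:ℝ))) μ :=
      (integrable_const (1:ℝ)).indicator hAmeas
    have hfabs : ∀ ω, |Set.indicator {ω | W (n + 1) ω = W n ω + 1} (fun _ => (1:ℝ)) ω| ≤ 1 := by
      intro ω
      by_cases hω : ω ∈ {ω | W (n + 1) ω = W n ω + 1}
      · rw [Set.indicator_of_mem hω]; norm_num
      · rw [Set.indicator_of_notMem hω]; norm_num
    -- integrability of g1 * f
    have hGint : Integrable ((fun ω => ((W n ω + k - 1).choose (k - 1) : ℝ)) *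
        (Set.indicator {ω | W (n + 1) ω = W n ω + 1} (fun _ => (1:ℝ)))) μ := by
      refine (integrable_const ((((M + n + k).choose (k - 1) : ℕ) : ℝ))).mono' ?_ ?_
      · exact ((((hchoosemeas n hn (k - 1)).mono (ℱ.le n) le_rfl).mul
          (measurable_const.indicator hAmeas))).aestronglyMeasurable
      · filter_upwards [haWle n hn] with ω hW
        rw [Pi.mul_apply, Real.norm_eq_abs, abs_mul]
        have h1 : |((W n ω + k - 1).choose (k - 1) : ℝ)| ≤ (((M + n + k).choose (k - 1) : ℕ) : ℝ) := by
          rw [abs_of_nonneg (by positivity)]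
          exact_mod_cast Nat.choose_le_choose (k - 1) (by omega : W n ω + k - 1 ≤ M + n + k)
        calc |((W n ω + k - 1).choose (k - 1) : ℝ)| * |_|
            ≤ (((M + n + k).choose (k - 1) : ℕ) : ℝ) * 1 :=
              mul_le_mul h1 (hfabs ω) (abs_nonneg _) (by positivity)
          _ = _ := mul_one _
    -- pull-out property
    have hpull : μ[(fun ω => ((W n ω + k - 1).choose (k - 1) : ℝ)) *
          (Set.indicator {ω | W (n + 1) ω = W n ω + 1} (fun _ => (1:ℝ))) | ℱ n]
        =ᵐ[μ] (fun ω => ((W n ω + k - 1).choose (k - 1) : ℝ)) *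
          μ[Set.indicator {ω | W (n + 1) ω = W n ω + 1} (fun _ => (1:ℝ)) | ℱ n] :=
      condExp_mul_of_stronglyMeasurable_left ((hchoosemeas n hn (k - 1)).stronglyMeasurable) hGint hfint
    -- the deterministic part
    have hF0meas : Measurable[ℱ n] (fun ω =>
        b (n + 1) k * ((W n ω + k - 1).choose k : ℝ) - d n k ω
          - b (n + 1) k * (β * p / V n ω) * ((W n ω + k - 1).choose (k - 1) : ℝ)) := by
      refine (((hchoosemeas n hn k).const_mul _).sub (hdmeas n hn)).sub ?_
      exact ((measurable_const.div (hVadapted n hn)).const_mul _).mul (hchoosemeas n hn (k - 1))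
    have hF0int : Integrable (fun ω =>
        b (n + 1) k * ((W n ω + k - 1).choose k : ℝ) - d n k ω
          - b (n + 1) k * (β * p / V n ω) * ((W n ω + k - 1).choose (k - 1) : ℝ)) μ := by
      refine (integrable_const ((((M + n + k).choose k : ℕ) : ℝ)
          + (n : ℝ) * (β * p / 3 * (((M + n + k).choose (k - 1) : ℕ) : ℝ))
          + β * p / 3 * (((M + n + k).choose (k - 1) : ℕ) : ℝ))).mono'
        (hF0meas.mono (ℱ.le n) le_rfl).aestronglyMeasurable ?_
      filter_upwards [hdbd n hn, haWle n hn, hV3 n hn] with ω h1 h2 h3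
      rw [Real.norm_eq_abs]
      have hVpos : (0:ℝ) < V n ω := by linarith
      have e1 : |b (n + 1) k * ((W n ω + k - 1).choose k : ℝ)| ≤ (((M + n + k).choose k : ℕ) : ℝ) := by
        rw [abs_mul, abs_of_pos (hbpos _), abs_of_nonneg (by positivity : (0:ℝ) ≤ ((W n ω + k - 1).choose k : ℝ))]
        have : ((W n ω + k - 1).choose k : ℝ) ≤ (((M + n + k).choose k : ℕ) : ℝ) := by
          exact_mod_cast Nat.choose_le_choose k (by omega : W n ω + k - 1 ≤ M + n + k)
        nlinarith [hbpos (n + 1), hble (n + 1), this]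
      have e2 : |b (n + 1) k * (β * p / V n ω) * ((W n ω + k - 1).choose (k - 1) : ℝ)|
          ≤ β * p / 3 * (((M + n + k).choose (k - 1) : ℕ) : ℝ) := by
        rw [abs_mul, abs_mul, abs_of_pos (hbpos _), abs_of_pos (by positivity : (0:ℝ) < β * p / V n ω),
          abs_of_nonneg (by positivity : (0:ℝ) ≤ ((W n ω + k - 1).choose (k - 1) : ℝ))]
        have hc : ((W n ω + k - 1).choose (k - 1) : ℝ) ≤ (((M + n + k).choose (k - 1) : ℕ) : ℝ) := by
          exact_mod_cast Nat.choose_le_choose (k - 1) (by omega : W n ω + k - 1 ≤ M + n + k)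
        calc b (n + 1) k * (β * p / V n ω) * ((W n ω + k - 1).choose (k - 1) : ℝ)
            ≤ 1 * (β * p / 3) * (((M + n + k).choose (k - 1) : ℕ) : ℝ) := by
              gcongr
              · exact hble _
          _ = β * p / 3 * (((M + n + k).choose (k - 1) : ℕ) : ℝ) := by ring
      have := abs_sub (b (n + 1) k * ((W n ω + k - 1).choose k : ℝ) - d n k ω)
        (b (n + 1) k * (β * p / V n ω) * ((W n ω + k - 1).choose (k - 1) : ℝ))
      have := abs_sub (b (n + 1) k * ((W n ω + k - 1).choose k : ℝ)) (d n k ω)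
      linarith
    -- d recursion
    have hdsum : ∀ ω, d (n + 1) k ω = d n k ω
        + b (n + 1) k * (β * p / V n ω) * ((W n ω + k - 1).choose (k - 1) : ℝ) := by
      intro ω
      rw [hd, hd, Nat.add_sub_cancel]
      have hins : Finset.Icc ℓ n = insert n (Finset.Icc ℓ (n - 1)) := by
        ext x
        simp only [Finset.mem_Icc, Finset.mem_insert]
        omega
      rw [hins, Finset.sum_insert (by simp only [Finset.mem_Icc]; omega)]
      ring
    -- Pascal identity a.e.
    have hpascal : ∀ᵐ ω ∂μ, ((W (n + 1) ω + k - 1).choose k : ℝ)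
        = ((W n ω + k - 1).choose k : ℝ)
          + Set.indicator {ω | W (n + 1) ω = W n ω + 1} (fun _ => (1:ℝ)) ω
            * ((W n ω + k - 1).choose (k - 1) : ℝ) := by
      filter_upwards [hstep n hn] with ω hω
      rcases hω with h | h
      · have hfω : Set.indicator {ω | W (n + 1) ω = W n ω + 1} (fun _ => (1:ℝ)) ω = 0 := by
          apply Set.indicator_of_notMem
          simp only [Set.mem_setOf_eq]
          omega
        rw [h, hfω]; ring
      · have hfω : Set.indicator {ω | W (n + 1) ω = W n ω + 1} (fun _ => (1:ℝ)) ω = 1 :=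
          Set.indicator_of_mem (show ω ∈ {ω | W (n + 1) ω = W n ω + 1} from h) _
        have e1 : W (n + 1) ω + k - 1 = (W n ω + k - 1) + 1 := by
          have := hWpos n hn ω; omega
        have e2 : k = (k - 1) + 1 := by omega
        have e3 : (W n ω + k - 1 + 1).choose k
            = (W n ω + k - 1).choose (k - 1) + (W n ω + k - 1).choose k := by
          conv_lhs => rw [e2]
          rw [Nat.choose_succ_succ, Nat.succ_eq_add_one, ← e2]
        rw [e1, e3, hfω]
        push_cast
        ring
    -- decomposition of Z (n+1)
    have hdecomp : Z k (n + 1) =ᵐ[μ] (fun ω =>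
        b (n + 1) k * ((W n ω + k - 1).choose k : ℝ) - d n k ω
          - b (n + 1) k * (β * p / V n ω) * ((W n ω + k - 1).choose (k - 1) : ℝ))
        + (b (n + 1) k) • ((fun ω => ((W n ω + k - 1).choose (k - 1) : ℝ)) *
            (Set.indicator {ω | W (n + 1) ω = W n ω + 1} (fun _ => (1:ℝ)))) := by
      filter_upwards [hpascal] with ω hω
      simp only [Pi.add_apply, Pi.smul_apply, Pi.mul_apply, smul_eq_mul]
      rw [hZ, hdsum ω, hω]
      ring
    calc μ[Z k (n + 1) | ℱ n]
        =ᵐ[μ] μ[(fun ω =>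
            b (n + 1) k * ((W n ω + k - 1).choose k : ℝ) - d n k ω
              - b (n + 1) k * (β * p / V n ω) * ((W n ω + k - 1).choose (k - 1) : ℝ))
            + (b (n + 1) k) • ((fun ω => ((W n ω + k - 1).choose (k - 1) : ℝ)) *
                (Set.indicator {ω | W (n + 1) ω = W n ω + 1} (fun _ => (1:ℝ)))) | ℱ n] :=
          condExp_congr_ae hdecomp
      _ =ᵐ[μ] (fun ω =>
            b (n + 1) k * ((W n ω + k - 1).choose k : ℝ) - d n k ω
              - b (n + 1) k * (β * p / V n ω) * ((W n ω + k - 1).choose (k - 1) : ℝ))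
          + (b (n + 1) k) • ((fun ω => ((W n ω + k - 1).choose (k - 1) : ℝ)) *
              (fun ω => α * W n ω / (n + 1) + β * p / V n ω)) := by
          refine (condExp_add hF0int (hGint.smul _) _).trans ?_
          rw [condExp_of_stronglyMeasurable (ℱ.le n) (hF0meas.stronglyMeasurable) hF0int]
          refine Filter.EventuallyEq.add (Filter.EventuallyEq.refl _ _) ?_
          refine (condExp_smul (b (n + 1) k) _ _).trans ?_
          have hmm := hpull.trans
            (Filter.EventuallyEq.mul (Filter.EventuallyEq.refl (ae μ)
              (fun ω => ((W n ω + k - 1).choose (k - 1) : ℝ))) (hcond n hn))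
          filter_upwards [hmm] with ω hω
          simp only [Pi.smul_apply, smul_eq_mul, Pi.mul_apply, hω]
      _ =ᵐ[μ] Z k n := by
          refine Filter.Eventually.of_forall fun ω => ?_
          simp only [Pi.add_apply, Pi.smul_apply, Pi.mul_apply, smul_eq_mul]
          rw [hZ]
          have hkey : ((W n ω + k - 1).choose k : ℝ) * (k : ℝ)
              = ((W n ω + k - 1).choose (k - 1) : ℝ) * (W n ω : ℝ) := by
            have h1 := Nat.choose_succ_right_eq (W n ω + k - 1) (k - 1)
            have e2 : k - 1 + 1 = k := by omega
            have e3 : W n ω + k - 1 - (k - 1) = W n ω := by have := hWpos n hn ω; omega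
            rw [e2, e3] at h1
            exact_mod_cast h1
          have hbm := hbmul n
          linear_combination (-(b (n + 1) k * α / ((n:ℝ) + 1))) * hkey
            + ((W n ω + k - 1).choose k : ℝ) * hbm
  refine ⟨fun n hn => ⟨(hZmeas n hn).stronglyMeasurable, hZint n hn⟩, ?_⟩
  intro m n hm hmn
  induction n, hmn using Nat.le_induction with
  | base =>
      rw [condExp_of_stronglyMeasurable (ℱ.le m) ((hZmeas m hm).stronglyMeasurable) (hZint m hm)]
  | succ n hn ih =>
      have hln : ℓ ≤ n := le_trans hm hn
      calc μ[Z k (n + 1) | ℱ m]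
          =ᵐ[μ] μ[μ[Z k (n + 1) | ℱ n] | ℱ m] :=
            (condExp_condExp_of_le (ℱ.mono hn) (ℱ.le n)).symm
        _ =ᵐ[μ] μ[Z k n | ℱ m] := condExp_congr_ae (onestep n hln)
        _ =ᵐ[μ] Z k m := ih
end
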